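/- arXiv:0812.3496 — 8 statements merged into one kernel-verified Lean document; each statement's English description precedes it below -/
import Mathlib

section
/- In the max-plus semiring R_max = (R ∪ {-∞}, max, +), if X is a finite set of vectors in R_max^n, and y, z are non-zero vectors in R_max^n that are not scalar multiples of each other, with y ∉ span(X), z ∉ span(X), and y ∈ span(X ∪ {z}), then z ∉ span(X ∪ {y}). -/
open scoped Classical

noncomputable section

/-- The max-plus linear span of a finite set of vectors in `R_max^n`,
where `R_max = (ℝ ∪ {-∞}, max, +)` is modelled by `WithBot ℝ` with `⊔` as
addition and `+` as multiplication. -/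
def mpSpan {n : ℕ} (X : Finset (Fin n → WithBot ℝ)) : Set (Fin n → WithBot ℝ) :=
  {v | ∃ c : (Fin n → WithBot ℝ) → WithBot ℝ, v = fun i => X.sup fun x => c x + x i}

lemma wb_add_sup (a b c : WithBot ℝ) : a + (b ⊔ c) = (a + b) ⊔ (a + c) := by
  induction a using WithBot.recBotCoe with
  | bot => simp
  | coe a =>
    induction b using WithBot.recBotCoe with
    | bot => simp
    | coe b =>
      induction c using WithBot.recBotCoe with
      | bot => simp
      | coe c =>
        rw [← WithBot.coe_sup, ← WithBot.coe_add, ← WithBot.coe_add, ← WithBot.coe_add,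
          ← WithBot.coe_sup]
        norm_cast
        rcases le_total b c with h | h <;> simp [max_eq_right, max_eq_left, h]

lemma wb_sup_add (a b c : WithBot ℝ) : (a ⊔ b) + c = (a + c) ⊔ (b + c) := by
  rw [add_comm, wb_add_sup, add_comm c a, add_comm c b]

lemma wb_finsup_add {α : Type*} (s : Finset α) (a : WithBot ℝ) (f : α → WithBot ℝ) :
    a + s.sup f = s.sup (fun x => a + f x) := by
  induction s using Finset.cons_induction with
  | empty => simp
  | cons x s h ih => simp [wb_add_sup, ih]

lemma wb_finsup_sup {α : Type*} (s : Finset α) (f g : α → WithBot ℝ) :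
    s.sup f ⊔ s.sup g = s.sup (fun x => f x ⊔ g x) := by
  induction s using Finset.cons_induction with
  | empty => simp
  | cons x s h ih =>
    simp only [Finset.sup_cons, ← ih]
    rw [sup_sup_sup_comm]

/-- Anti-exchange axiom for max-plus linear spans. -/
theorem maxPlus_antiExchange {n : ℕ} (X : Finset (Fin n → WithBot ℝ))
    (y z : Fin n → WithBot ℝ)
    (hy : y ≠ fun _ => (⊥ : WithBot ℝ)) (hz : z ≠ fun _ => (⊥ : WithBot ℝ))
    (hyz : ¬ ∃ lam : WithBot ℝ, y = fun i => lam + z i)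
    (hzy : ¬ ∃ lam : WithBot ℝ, z = fun i => lam + y i)
    (hyX : y ∉ mpSpan X) (hzX : z ∉ mpSpan X)
    (hmem : y ∈ mpSpan (insert z X)) :
    z ∉ mpSpan (insert y X) := by
  intro hz'
  obtain ⟨c, hc⟩ := hmem
  obtain ⟨d, hd⟩ := hz'
  -- sups over X only
  set S : Fin n → WithBot ℝ := fun i => X.sup (fun x => c x + x i) with hS
  set T : Fin n → WithBot ℝ := fun i => X.sup (fun x => d x + x i) with hT
  have hy' : ∀ i, y i = (c z + z i) ⊔ S i := by
    intro i
    have := congrFun hc i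
    simpa [Finset.sup_insert] using this
  have hz'' : ∀ i, z i = (d y + y i) ⊔ T i := by
    intro i
    have := congrFun hd i
    simpa [Finset.sup_insert] using this
  -- the candidate element of span X
  set w : Fin n → WithBot ℝ := fun i => (c z + T i) ⊔ S i with hw
  have hwX : w ∈ mpSpan X := by
    refine ⟨fun x => (c z + d x) ⊔ c x, funext fun i => ?_⟩
    have h1 : c z + T i = X.sup (fun x => (c z + d x) + x i) := by
      rw [hT, wb_finsup_add]
      congr 1
      funext x
      rw [add_assoc]
    have h2 : (fun x => ((c z + d x) ⊔ c x) + x i)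
        = (fun x => ((c z + d x) + x i) ⊔ (c x + x i)) := by
      funext x; rw [wb_sup_add]
    show (c z + T i) ⊔ S i = X.sup fun x => ((c z + d x) ⊔ c x) + x i
    rw [h2, ← wb_finsup_sup, ← h1]
  -- key equation
  have key : ∀ i, y i = ((c z + d y) + y i) ⊔ w i := by
    intro i
    conv_lhs => rw [hy' i, hz'' i, wb_add_sup, ← add_assoc, sup_assoc]
  -- Case: μ + r < r for all reals r  ⇒  y = w ∈ span X, contradiction
  have caseNeg : (∀ r : ℝ, (c z + d y) + (r : WithBot ℝ) < (r : WithBot ℝ)) → False := by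
    intro hneg
    apply hyX
    have hyw : y = w := by
      funext i
      rcases eq_or_ne (y i) ⊥ with hyi | hyi
      · have hk := key i
        rw [hyi] at hk
        have hle : w i ≤ ⊥ := by rw [hk]; exact le_sup_right
        rw [hyi]
        exact (le_bot_iff.mp hle).symm
      · obtain ⟨r, hr⟩ := WithBot.ne_bot_iff_exists.mp hyi
        have hk := key i
        rw [← hr] at hk
        have hlt : (c z + d y) + (r : WithBot ℝ) < (r : WithBot ℝ) := hneg r
        rcases le_total ((c z + d y) + (r : WithBot ℝ)) (w i) with h | h
        · rw [sup_eq_right.mpr h] at hk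
          rw [← hr]; exact hk
        · rw [sup_eq_left.mpr h] at hk
          exact absurd hk.symm (ne_of_lt hlt)
    rw [hyw]; exact hwX
  rcases eq_or_ne (c z) ⊥ with hcz | hcz
  · exact caseNeg fun r => by rw [hcz]; simp
  obtain ⟨a, ha⟩ := WithBot.ne_bot_iff_exists.mp hcz
  rcases eq_or_ne (d y) ⊥ with hdy | hdy
  · exact caseNeg fun r => by rw [hdy]; simp
  obtain ⟨b, hb⟩ := WithBot.ne_bot_iff_exists.mp hdy
  rcases lt_trichotomy (a + b) 0 with hab | hab | hab
  · -- μ < 0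
    refine caseNeg fun r => ?_
    rw [← ha, ← hb, ← WithBot.coe_add, ← WithBot.coe_add]
    exact_mod_cast by linarith
  · -- μ = 0 : y = c z + z, contradicting hyz
    apply hyz
    refine ⟨c z, funext fun i => ?_⟩
    have h1 : c z + z i ≤ y i := by rw [hy' i]; exact le_sup_left
    have h2 : y i ≤ c z + z i := by
      have hz3 : d y + y i ≤ z i := by rw [hz'' i]; exact le_sup_left
      have h4 : c z + (d y + y i) ≤ c z + z i := add_le_add le_rfl hz3
      rw [← add_assoc, ← ha, ← hb, ← WithBot.coe_add, hab] at h4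
      rw [← ha]
      simpa using h4
    exact le_antisymm h2 h1
  · -- μ > 0 : y = ⊥, contradicting hy
    apply hy
    funext i
    have hge : (c z + d y) + y i ≤ y i := le_sup_left.trans_eq (key i).symm
    rcases eq_or_ne (y i) ⊥ with hyi | hyi
    · exact hyi
    · obtain ⟨r, hr⟩ := WithBot.ne_bot_iff_exists.mp hyi
      rw [← hr, ← ha, ← hb, ← WithBot.coe_add, ← WithBot.coe_add] at hge
      have : a + b + r ≤ r := by exact_mod_cast hge
      linarith
end
end

section
/- Let P⁺, P⁻, Q⁺, Q⁻ be positive polynomial expressions in variables x_1,...,x_m such that the identity P⁺ + Q⁻ = P⁻ + Q⁺ holds in all commutative rings, and such that no monomial appears (with nonzero coefficient) simultaneously in Q⁺ and Q⁻ when interpreted in N[x_1,...,x_m]. Then there exists a positive polynomial expression R such that the identities P⁺ = Q⁺ + R and P⁻ = Q⁻ + R hold in all commutative semirings. -/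
/-- **Strong transfer principle.** Positive polynomial expressions are modelled as
multivariate polynomials with coefficients in `ℕ`. If `P⁺ + Q⁻ = P⁻ + Q⁺` holds under
every substitution in every commutative ring, and no monomial appears (with nonzero
coefficient) simultaneously in `Q⁺` and `Q⁻`, then there is a positive polynomial
expression `R` such that `P⁺ = Q⁺ + R` and `P⁻ = Q⁻ + R` hold under every substitution
in every commutative semiring. -/
theorem strong_transfer_principle {m : ℕ}
    (Pp Pm Qp Qm : MvPolynomial (Fin m) ℕ)
    (hring : ∀ (R : Type) [CommRing R] (f : Fin m → R),
      MvPolynomial.eval₂ (Nat.castRingHom R) f Pp + MvPolynomial.eval₂ (Nat.castRingHom R) f Qm =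
      MvPolynomial.eval₂ (Nat.castRingHom R) f Pm + MvPolynomial.eval₂ (Nat.castRingHom R) f Qp)
    (hdisj : ∀ d : (Fin m) →₀ ℕ, Qp.coeff d = 0 ∨ Qm.coeff d = 0) :
    ∃ R : MvPolynomial (Fin m) ℕ,
      ∀ (S : Type) [CommSemiring S] (f : Fin m → S),
        MvPolynomial.eval₂ (Nat.castRingHom S) f Pp =
          MvPolynomial.eval₂ (Nat.castRingHom S) f Qp + MvPolynomial.eval₂ (Nat.castRingHom S) f R ∧
        MvPolynomial.eval₂ (Nat.castRingHom S) f Pm =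
          MvPolynomial.eval₂ (Nat.castRingHom S) f Qm + MvPolynomial.eval₂ (Nat.castRingHom S) f R := by
  -- Step 1: get the identity over ℤ-polynomials, hence coefficientwise over ℕ.
  have hmap : MvPolynomial.map (Nat.castRingHom ℤ) Pp + MvPolynomial.map (Nat.castRingHom ℤ) Qm
      = MvPolynomial.map (Nat.castRingHom ℤ) Pm + MvPolynomial.map (Nat.castRingHom ℤ) Qp := by
    have h := hring (MvPolynomial (Fin m) ℤ) MvPolynomial.X
    have hhom : (Nat.castRingHom (MvPolynomial (Fin m) ℤ))
        = (MvPolynomial.C : ℤ →+* MvPolynomial (Fin m) ℤ).comp (Nat.castRingHom ℤ) :=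
      Subsingleton.elim _ _
    rw [MvPolynomial.map_eq_eval₂Hom_C_comp]; simp only [MvPolynomial.coe_eval₂Hom]; rw [hhom] at h; exact h
  have hcoeff : ∀ d, Pp.coeff d + Qm.coeff d = Pm.coeff d + Qp.coeff d := by
    intro d
    have := congrArg (fun p => MvPolynomial.coeff d p) hmap
    simp only [MvPolynomial.coeff_add, MvPolynomial.coeff_map, Nat.coe_castRingHom] at this
    exact_mod_cast this
  -- Step 2: Qp ≤ Pp coefficientwise, Qm ≤ Pm coefficientwise
  have hQpPp : ∀ d, Qp.coeff d ≤ Pp.coeff d := by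
    intro d
    rcases hdisj d with h | h
    · simp [h]
    · have := hcoeff d; omega
  have hQmPm : ∀ d, Qm.coeff d ≤ Pm.coeff d := by
    intro d
    rcases hdisj d with h | h
    · have := hcoeff d; omega
    · simp [h]
  set R : MvPolynomial (Fin m) ℕ :=
    ∑ d ∈ Pp.support, MvPolynomial.monomial d (Pp.coeff d - Qp.coeff d) with hR
  have hRcoeff : ∀ d, R.coeff d = Pp.coeff d - Qp.coeff d := by
    intro d
    rw [hR, MvPolynomial.coeff_sum]
    simp only [MvPolynomial.coeff_monomial]
    by_cases hd : d ∈ Pp.support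
    · rw [Finset.sum_eq_single d]
      · simp
      · intro b _ hb; simp [hb]
      · intro h; exact absurd hd h
    · rw [Finset.sum_eq_zero]
      · have : Pp.coeff d = 0 := by simpa using hd
        have := hQpPp d; omega
      · intro b hb
        have hbd : b ≠ d := fun h => hd (h ▸ hb)
        simp [hbd]
  refine ⟨R, ?_⟩
  have h1 : Pp = Qp + R := by
    ext d
    simp only [MvPolynomial.coeff_add, hRcoeff]
    have := hQpPp d; omega
  have h2 : Pm = Qm + R := by
    ext d
    simp only [MvPolynomial.coeff_add, hRcoeff]
    have := hQpPp d; have := hQmPm d; have := hcoeff d; omega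
  intro S _ f
  constructor
  · conv_lhs => rw [h1]
    simp [MvPolynomial.eval₂_add]
  · conv_lhs => rw [h2]
    simp [MvPolynomial.eval₂_add]
end

section
/- For n×n matrices A, B over any commutative semiring S, the identity |AB|⁺ + |A|⁺|B|⁻ + |A|⁻|B|⁺ = |AB|⁻ + |A|⁺|B|⁺ + |A|⁻|B|⁻ holds, where |M|⁺ = Σ_{σ ∈ A_n} m_{1σ(1)}···m_{nσ(n)} is the positive determinant (sum over even permutations) and |M|⁻ is the sum over odd permutations. -/
open scoped Classical

noncomputable section

set_option maxHeartbeats 1000000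

/-- Positive part of the bideterminant: sum over even permutations. -/
def detp {S : Type*} [CommSemiring S] {n : ℕ} (A : Matrix (Fin n) (Fin n) S) : S :=
  ∑ σ ∈ Finset.univ.filter (fun σ : Equiv.Perm (Fin n) => Equiv.Perm.sign σ = 1),
    ∏ i, A i (σ i)

/-- Negative part of the bideterminant: sum over odd permutations. -/
def detm {S : Type*} [CommSemiring S] {n : ℕ} (A : Matrix (Fin n) (Fin n) S) : S :=
  ∑ σ ∈ Finset.univ.filter (fun σ : Equiv.Perm (Fin n) => Equiv.Perm.sign σ = -1),
    ∏ i, A i (σ i)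

lemma detp_map {S T : Type*} [CommSemiring S] [CommSemiring T] (f : S →+* T) {n : ℕ}
    (M : Matrix (Fin n) (Fin n) S) : detp (M.map f) = f (detp M) := by
  simp [detp, map_sum, map_prod, Matrix.map_apply]

lemma detm_map {S T : Type*} [CommSemiring S] [CommSemiring T] (f : S →+* T) {n : ℕ}
    (M : Matrix (Fin n) (Fin n) S) : detm (M.map f) = f (detm M) := by
  simp [detm, map_sum, map_prod, Matrix.map_apply]

lemma det_eq_detp_sub_detm {R : Type*} [CommRing R] {n : ℕ} (M : Matrix (Fin n) (Fin n) R) :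
    M.det = detp M - detm M := by
  rw [← Matrix.det_transpose, Matrix.det_apply, detp, detm, sub_eq_add_neg,
    ← Finset.sum_neg_distrib,
    ← Finset.sum_filter_add_sum_filter_not Finset.univ
      (fun σ : Equiv.Perm (Fin n) => Equiv.Perm.sign σ = 1)]
  congr 1
  · apply Finset.sum_congr rfl
    intro σ hσ
    simp only [Finset.mem_filter] at hσ
    rw [hσ.2]
    simp [Matrix.transpose_apply]
  · apply Finset.sum_congr
    · ext σ
      constructor
      · intro h
        simp only [Finset.mem_filter, Finset.mem_univ, true_and] at *
        rcases Int.units_eq_one_or (Equiv.Perm.sign σ) with h1 | h1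
        · exact absurd h1 h
        · exact h1
      · intro h
        simp only [Finset.mem_filter, Finset.mem_univ, true_and] at *
        rw [h]; decide
    · intro σ hσ
      simp only [Finset.mem_filter, Finset.mem_univ, true_and] at hσ
      rw [hσ]; simp [Matrix.transpose_apply]

theorem key {R : Type*} [CommRing R] {n : ℕ} (A B : Matrix (Fin n) (Fin n) R) :
    detp (A * B) + detp A * detm B + detm A * detp B =
      detm (A * B) + detp A * detp B + detm A * detm B := by
  have h1 := det_eq_detp_sub_detm (A * B)
  have h2 := det_eq_detp_sub_detm A
  have h3 := det_eq_detp_sub_detm B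
  have h4 := Matrix.det_mul A B
  linear_combination -h1 + h4 + B.det * h2 + (detp A - detm A) * h3

theorem key_nat {ι : Type} {n : ℕ} (X Y : Matrix (Fin n) (Fin n) (MvPolynomial ι ℕ)) :
    detp (X * Y) + detp X * detm Y + detm X * detp Y =
      detm (X * Y) + detp X * detp Y + detm X * detm Y := by
  apply MvPolynomial.map_injective (Nat.castRingHom ℤ) Nat.cast_injective
  have h := key (X.map (MvPolynomial.map (Nat.castRingHom ℤ)))
    (Y.map (MvPolynomial.map (Nat.castRingHom ℤ)))
  rw [← Matrix.map_mul] at h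
  simp only [detp_map, detm_map] at h
  simpa only [map_add, map_mul] using h

/-- Weak multiplicativity of the bideterminant over any commutative semiring. -/
theorem bideterminant_mul_weak {S : Type*} [CommSemiring S] {n : ℕ}
    (A B : Matrix (Fin n) (Fin n) S) :
    detp (A * B) + detp A * detm B + detm A * detp B =
      detm (A * B) + detp A * detp B + detm A * detm B := by
  let ι : Type := (Fin n × Fin n) ⊕ (Fin n × Fin n)
  let X : Matrix (Fin n) (Fin n) (MvPolynomial ι ℕ) := fun i j => MvPolynomial.X (Sum.inl (i, j))
  let Y : Matrix (Fin n) (Fin n) (MvPolynomial ι ℕ) := fun i j => MvPolynomial.X (Sum.inr (i, j))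
  let φ : MvPolynomial ι ℕ →+* S := MvPolynomial.eval₂Hom (Nat.castRingHom S)
    (Sum.elim (fun p => A p.1 p.2) (fun p => B p.1 p.2))
  have hA : X.map φ = A := by
    ext i j; rw [Matrix.map_apply]; simp [X, Matrix.map_apply, φ, MvPolynomial.eval₂Hom_X']
  have hB : Y.map φ = B := by
    ext i j; rw [Matrix.map_apply]; simp [Y, Matrix.map_apply, φ, MvPolynomial.eval₂Hom_X']
  have h := congrArg φ (key_nat X Y)
  simp only [map_add, map_mul, ← detp_map φ, ← detm_map φ] at h
  rw [Matrix.map_mul, hA, hB] at h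
  exact h
end
end

section
/- For n×n matrices A, B over any commutative semiring S, there exists an element s ∈ S such that |AB|⁺ = |A|⁺|B|⁺ + |A|⁻|B|⁻ + s and |AB|⁻ = |A|⁺|B|⁻ + |A|⁻|B|⁺ + s. -/
open scoped Classical

noncomputable section

open Finset Equiv Equiv.Perm

namespace BidetAux

variable {S : Type*} [CommSemiring S] {n : ℕ}

/-- Sign-restricted bideterminant. -/
def D (e : ℤˣ) (A : Matrix (Fin n) (Fin n) S) : S :=
  ∑ σ ∈ Finset.univ.filter (fun σ : Perm (Fin n) => sign σ = e), ∏ i, A i (σ i)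

lemma detp_eq_D (A : Matrix (Fin n) (Fin n) S) : detp A = D 1 A := rfl
lemma detm_eq_D (A : Matrix (Fin n) (Fin n) S) : detm A = D (-1) A := rfl

/-- The contribution of a function `f` to the sign-`e` part of the bideterminant of `A*B`. -/
def T (A B : Matrix (Fin n) (Fin n) S) (e : ℤˣ) (f : Fin n → Fin n) : S :=
  ∑ σ ∈ Finset.univ.filter (fun σ : Perm (Fin n) => sign σ = e),
    ∏ i, A i (f i) * B (f i) (σ i)

lemma D_mul_expand (A B : Matrix (Fin n) (Fin n) S) (e : ℤˣ) :
    D e (A * B) = ∑ f : Fin n → Fin n, T A B e f := by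
  unfold D T
  rw [Finset.sum_comm]
  refine Finset.sum_congr rfl fun σ _ => ?_
  simp only [Matrix.mul_apply]
  rw [Finset.prod_univ_sum]
  simp

lemma T_nonbij (A B : Matrix (Fin n) (Fin n) S) {f : Fin n → Fin n}
    (hf : ¬ Function.Bijective f) : T A B 1 f = T A B (-1) f := by
  obtain ⟨i, j, hfij, hij⟩ : ∃ i j, f i = f j ∧ i ≠ j := by
    rw [← Finite.injective_iff_bijective, Function.Injective] at hf
    push_neg at hf
    exact hf
  unfold T
  refine Finset.sum_nbij' (fun σ => σ * Equiv.swap i j) (fun σ => σ * Equiv.swap i j)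
    ?_ ?_ ?_ ?_ ?_
  · intro σ hσ
    simp only [mem_filter, mem_univ, true_and] at hσ ⊢
    simp [sign_swap hij, hσ]
  · intro σ hσ
    simp only [mem_filter, mem_univ, true_and] at hσ ⊢
    simp [sign_swap hij, hσ]
  · intro σ _; simp [mul_assoc]
  · intro σ _; simp [mul_assoc]
  · intro σ _
    have hB : (∏ x, B (f x) ((σ * Equiv.swap i j) x)) = ∏ x, B (f x) (σ x) := by
      refine Fintype.prod_equiv (Equiv.swap i j) _ _ fun x => ?_
    -- goal: B (f x) (σ (swap x)) = B (f (swap x)) (σ (swap x))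
      rw [Equiv.apply_swap_eq_self hfij]
      rfl
    simp only [Finset.prod_mul_distrib] at *
    rw [hB]

lemma T_perm (A B : Matrix (Fin n) (Fin n) S) (e : ℤˣ) (τ : Perm (Fin n)) :
    T A B e τ = (∏ i, A i (τ i)) * D (e * sign τ) B := by
  unfold T D
  simp only [Finset.prod_mul_distrib]
  rw [← Finset.mul_sum]
  congr 1
  refine Finset.sum_nbij' (fun σ => σ * τ⁻¹) (fun π => π * τ) ?_ ?_ ?_ ?_ ?_
  · intro σ hσ
    simp only [mem_filter, mem_univ, true_and] at hσ ⊢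
    rw [Equiv.Perm.sign_mul, hσ, sign_inv]
  · intro π hπ
    simp only [mem_filter, mem_univ, true_and] at hπ ⊢
    rw [Equiv.Perm.sign_mul, hπ, mul_assoc, mul_comm (sign τ)]
    simp
  · intro σ _; simp [mul_assoc]
  · intro π _; simp [mul_assoc]
  · intro σ _
    refine Fintype.prod_equiv τ _ _ fun x => ?_
    simp

lemma D_mul_main (A B : Matrix (Fin n) (Fin n) S) (e : ℤˣ) :
    D e (A * B) = D 1 A * D e B + D (-1) A * D (e * (-1)) B
      + ∑ f ∈ Finset.univ.filter (fun f : Fin n → Fin n => ¬ Function.Bijective f),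
          T A B e f := by
  rw [D_mul_expand]
  rw [← Finset.sum_filter_add_sum_filter_not Finset.univ
      (fun f : Fin n → Fin n => Function.Bijective f)]
  congr 1
  have h1 : ∑ f ∈ Finset.univ.filter (fun f : Fin n → Fin n => Function.Bijective f),
      T A B e f = ∑ τ : Perm (Fin n), T A B e ⇑τ :=
    Finset.sum_bij (fun p h => Equiv.ofBijective p (Finset.mem_filter.1 h).2)
      (fun _ _ => mem_univ _)
      (fun _ _ _ _ h => by injection h)
      (fun b _ => ⟨b, Finset.mem_filter.2 ⟨mem_univ _, b.bijective⟩, Equiv.coe_fn_injective rfl⟩)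
      (fun _ _ => rfl)
  rw [h1]
  simp_rw [T_perm]
  rw [← Finset.sum_filter_add_sum_filter_not Finset.univ
      (fun τ : Perm (Fin n) => sign τ = 1)]
  congr 1
  · rw [show (D 1 A : S) = ∑ τ ∈ Finset.univ.filter (fun τ : Perm (Fin n) => sign τ = 1),
        ∏ i, A i (τ i) from rfl, Finset.sum_mul]
    refine Finset.sum_congr rfl fun τ hτ => ?_
    rw [(Finset.mem_filter.1 hτ).2, mul_one]
  · have hfil : Finset.univ.filter (fun τ : Perm (Fin n) => ¬ sign τ = 1)
        = Finset.univ.filter (fun τ : Perm (Fin n) => sign τ = -1) := by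
      refine Finset.filter_congr fun τ _ => ?_
      constructor
      · intro h
        rcases Int.units_eq_one_or (sign τ) with h1 | h1
        · exact absurd h1 h
        · exact h1
      · intro h h1
        rw [h1] at h
        exact absurd h (by decide)
    rw [hfil, show (D (-1) A : S) = ∑ τ ∈ Finset.univ.filter
        (fun τ : Perm (Fin n) => sign τ = -1), ∏ i, A i (τ i) from rfl, Finset.sum_mul]
    refine Finset.sum_congr rfl fun τ hτ => ?_
    rw [(Finset.mem_filter.1 hτ).2]

end BidetAux

open BidetAux in
/-- Strong multiplicativity of the bideterminant over any commutative semiring. -/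
theorem bideterminant_mul_strong {S : Type*} [CommSemiring S] {n : ℕ}
    (A B : Matrix (Fin n) (Fin n) S) :
    ∃ s : S,
      detp (A * B) = detp A * detp B + detm A * detm B + s ∧
      detm (A * B) = detp A * detm B + detm A * detp B + s := by
  refine ⟨∑ f ∈ Finset.univ.filter (fun f : Fin n → Fin n => ¬ Function.Bijective f),
    T A B 1 f, ?_, ?_⟩
  · rw [detp_eq_D (A*B), D_mul_main A B 1, detp_eq_D A, detm_eq_D A, detp_eq_D B,
      detm_eq_D B, show ((1 : ℤˣ) * (-1)) = -1 from one_mul _]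
  · have hs : ∑ f ∈ Finset.univ.filter (fun f : Fin n → Fin n => ¬ Function.Bijective f),
        T A B (-1) f
        = ∑ f ∈ Finset.univ.filter (fun f : Fin n → Fin n => ¬ Function.Bijective f),
            T A B 1 f :=
      Finset.sum_congr rfl fun f hf => (T_nonbij A B (Finset.mem_filter.1 hf).2).symm
    rw [detm_eq_D (A*B), D_mul_main A B (-1), detp_eq_D A, detm_eq_D A, detp_eq_D B,
      detm_eq_D B, show ((-1 : ℤˣ) * (-1)) = 1 by decide, hs]
end
end

section
/- In any commutative semiring, the semiring Amitsur–Levitzki identity holds for n×n matrices: for any 2n matrices X_1,...,X_{2n}, Σ_{σ ∈ A_{2n}} X_{σ(1)}···X_{σ(2n)} = Σ_{σ ∈ S_{2n} \ A_{2n}} X_{σ(1)}···X_{σ(2n)}, where A_{2n} is the alternating group. -/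
set_option synthInstance.maxHeartbeats 1000000
set_option maxHeartbeats 1000000

open scoped Classical
noncomputable section
open Finset Polynomial


namespace ALAux

lemma sum_pow_expand {β : Type*} [Semiring β] {κ : Type*} [Fintype κ] (f : κ → β) (L : ℕ) :
    (∑ k, f k) ^ L = ∑ w : Fin L → κ, (List.ofFn fun i => f (w i)).prod := by
  induction L with
  | zero => simp
  | succ L ih =>
    rw [pow_succ', ih, Finset.mul_sum]
    rw [← Equiv.sum_comp (Fin.consEquiv fun _ => κ)
      (fun w => (List.ofFn fun i => f (w i)).prod)]
    rw [Fintype.sum_prod_type]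
    rw [Finset.sum_comm]
    refine Finset.sum_congr rfl fun w _ => ?_
    rw [Finset.sum_mul]
    refine Finset.sum_congr rfl fun k _ => ?_
    simp [List.ofFn_succ, Fin.consEquiv]

lemma derivative_det {C : Type*} [CommRing C] {k : ℕ} (A : Matrix (Fin k) (Fin k) (Polynomial C)) :
    derivative A.det = ∑ j, (A.updateCol j fun i => derivative (A i j)).det := by
  simp only [Matrix.det_apply]
  rw [map_sum]
  rw [Finset.sum_comm]
  refine Finset.sum_congr rfl fun σ _ => ?_
  rw [Units.smul_def, map_zsmul]
  have hprod : derivative (∏ i, A (σ i) i)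
      = ∑ j, (∏ i ∈ univ.erase j, A (σ i) i) * derivative (A (σ j) j) := by
    have := Polynomial.derivative_prod (s := (univ : Finset (Fin k)).val)
      (f := fun i => A (σ i) i)
    simpa [Finset.prod, Finset.sum, Finset.erase] using this
  rw [hprod, Finset.smul_sum]
  refine Finset.sum_congr rfl fun j _ => ?_
  rw [Units.smul_def]
  congr 1
  have : ∀ i, (A.updateCol j fun i => derivative (A i j)) (σ i) i
      = if i = j then derivative (A (σ j) j) else A (σ i) i := by
    intro i
    rw [Matrix.updateCol_apply]
    by_cases h : i = j <;> simp [h]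
  rw [Finset.prod_congr rfl fun i _ => this i]
  rw [← Finset.mul_prod_erase univ _ (Finset.mem_univ j), if_pos rfl]
  rw [Finset.prod_congr rfl (fun i hi => if_neg (Finset.ne_of_mem_erase hi))]
  rw [mul_comm]

end ALAux

namespace ALAux2
open Matrix

variable {C : Type*} [CommRing C] [Nontrivial C]

lemma trace_map_C {N : ℕ} (Y : Matrix (Fin N) (Fin N) C) :
    Matrix.trace (Y.map (Polynomial.C : C →+* C[X])) = Polynomial.C (Matrix.trace Y) := by
  simp [Matrix.trace, Matrix.diag, Matrix.map_apply]

lemma pow_card_eq_zero_of_trace_pow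
    (htf : ∀ (k : ℕ), k ≠ 0 → ∀ x : C, (k : C) * x = 0 → x = 0)
    {N : ℕ} (M : Matrix (Fin N) (Fin N) C)
    (h : ∀ m : ℕ, 1 ≤ m → m ≤ N → Matrix.trace (M ^ m) = 0) :
    M ^ N = 0 := by
  rcases Nat.eq_zero_or_pos N with hN | hN
  · subst hN; exact Subsingleton.elim _ _
  set Mc : Matrix (Fin N) (Fin N) C[X] := M.map Polynomial.C with hMcdef
  have hMcpow : ∀ k : ℕ, Mc ^ k = (M ^ k).map Polynomial.C := by
    intro k
    have := map_pow (Polynomial.C.mapMatrix (m := Fin N)) M k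
    simpa [RingHom.mapMatrix_apply, hMcdef] using this.symm
  set x : Matrix (Fin N) (Fin N) C[X] := (Polynomial.X : C[X]) • Mc with hxdef
  set Nm : Matrix (Fin N) (Fin N) C[X] := 1 - x with hNmdef
  have hq : M.charpolyRev = Nm.det := rfl
  -- step 2 : derivative of entries
  have hent : ∀ i j, derivative (Nm i j) = -(Mc i j) := by
    intro i j
    have : Nm i j = (if i = j then (1:C[X]) else 0) - Polynomial.X * Mc i j := by
      simp [hNmdef, hxdef, Matrix.sub_apply, Matrix.one_apply, Matrix.smul_apply, smul_eq_mul]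
    rw [this]
    by_cases hij : i = j <;> simp [hij, hMcdef, Matrix.map_apply]
  -- step 1+3 : Jacobi
  have hderiv : derivative Nm.det = -Matrix.trace (Nm.adjugate * Mc) := by
    rw [ALAux.derivative_det Nm]
    have : ∀ j, (Nm.updateCol j fun i => derivative (Nm i j)).det
        = ∑ i, Nm.adjugate j i * (-(Mc i j)) := by
      intro j
      have h1 : (Nm.updateCol j fun i => derivative (Nm i j)).det
          = Matrix.cramer Nm (fun i => derivative (Nm i j)) j := (Matrix.cramer_apply _ _ _).symm
      rw [h1, Matrix.cramer_eq_adjugate_mulVec]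
      simp only [Matrix.mulVec, dotProduct, hent]
    rw [Finset.sum_congr rfl fun j _ => this j]
    rw [Matrix.trace, ← Finset.sum_neg_distrib]
    refine Finset.sum_congr rfl fun j _ => ?_
    simp [Matrix.diag, Matrix.mul_apply, mul_neg]
  -- step 4 : geometric sum
  set S : Matrix (Fin N) (Fin N) C[X] := ∑ i ∈ Finset.range N, x ^ i with hSdef
  have hxS : Commute x S := Commute.sum_right _ _ _ fun i _ => (Commute.refl x).pow_right i
  have hNS : Nm * S = 1 - x ^ N := by
    have hcomm : Commute Nm S := (Commute.one_left S).sub_left hxS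
    have hg : S * (x - 1) = x ^ N - 1 := geom_sum_mul x N
    have h2 : S * x - S = x ^ N - 1 := by simpa [mul_sub, mul_one] using hg
    calc Nm * S = S * Nm := hcomm.eq
    _ = S - S * x := by rw [hNmdef, mul_sub, mul_one]
    _ = 1 - x ^ N := by rw [← neg_sub (S * x) S, h2, neg_sub]
  have hxN : x ^ N = (Polynomial.X : C[X]) ^ N • Mc ^ N := smul_pow _ _ _
  have hadj : Nm.adjugate = Nm.det • S + Nm.adjugate * x ^ N := by
    have h1 : Nm.adjugate * (Nm * S) = Nm.det • S := by
      rw [← mul_assoc, Matrix.adjugate_mul, Matrix.smul_mul, one_mul]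
    rw [hNS, mul_sub, mul_one] at h1
    rw [← h1, sub_add_cancel]
  have htr : Matrix.trace (Nm.adjugate * Mc)
      = Nm.det * Matrix.trace (S * Mc)
        + Polynomial.X ^ N * Matrix.trace (Nm.adjugate * Mc ^ N * Mc) := by
    conv_lhs => rw [hadj]
    rw [add_mul, Matrix.trace_add, Matrix.smul_mul, Matrix.trace_smul, smul_eq_mul]
    congr 1
    rw [hxN, mul_smul_comm, Matrix.smul_mul, Matrix.trace_smul, smul_eq_mul, mul_assoc]
  have hSMc : Matrix.trace (S * Mc) = 0 := by
    rw [hSdef, Finset.sum_mul, Matrix.trace_sum]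
    refine Finset.sum_eq_zero fun i hi => ?_
    have hx : x ^ i * Mc = (Polynomial.X : C[X]) ^ i • Mc ^ (i + 1) := by
      rw [_root_.smul_pow, Matrix.smul_mul, pow_succ]
    rw [hx, Matrix.trace_smul, hMcpow, trace_map_C,
      h (i + 1) (by omega) (by have := Finset.mem_range.mp hi; omega)]
    simp
  have hfinal : derivative Nm.det
      = -(Polynomial.X ^ N * Matrix.trace (Nm.adjugate * Mc ^ N * Mc)) := by
    rw [hderiv, htr, hSMc, mul_zero, zero_add]
  have hdeg : Nm.det.natDegree ≤ N := by
    rw [← hq, ← Matrix.reverse_charpoly]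
    refine (Polynomial.reverse_natDegree_le _).trans ?_
    rw [Matrix.charpoly_natDegree_eq_dim]
    simp
  have hd0 : derivative Nm.det = 0 := by
    apply Polynomial.ext
    intro j
    rcases lt_or_ge j N with hj | hj
    · rw [hfinal, Polynomial.coeff_neg, mul_comm, Polynomial.coeff_mul_X_pow',
        if_neg (by omega), neg_zero, Polynomial.coeff_zero]
    · rw [Polynomial.coeff_zero]
      refine Polynomial.coeff_eq_zero_of_natDegree_lt ?_
      have h3 : (derivative Nm.det).natDegree ≤ N - 1 :=
        (Polynomial.natDegree_derivative_le _).trans (Nat.sub_le_sub_right hdeg 1)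
      omega
  have hcoeff : ∀ j : ℕ, 1 ≤ j → Nm.det.coeff j = 0 := by
    intro j hj
    obtain ⟨j', rfl⟩ : ∃ j', j = j' + 1 := ⟨j - 1, by omega⟩
    have hcd := Polynomial.coeff_derivative Nm.det j'
    rw [hd0, Polynomial.coeff_zero] at hcd
    refine htf (j' + 1) (by omega) _ ?_
    rw [mul_comm]
    push_cast
    exact hcd.symm
  have h1 : Nm.det = 1 := by
    apply Polynomial.ext
    intro j
    rcases Nat.eq_zero_or_pos j with rfl | hj
    · rw [Polynomial.coeff_zero_eq_eval_zero, ← hq]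
      simp [Polynomial.coeff_one]
    · rw [hcoeff j hj, Polynomial.coeff_one, if_neg (by omega)]
  have hrev : M.charpoly.reverse = 1 := by rw [Matrix.reverse_charpoly, hq, h1]
  have hdim : M.charpoly.natDegree = N := by
    rw [Matrix.charpoly_natDegree_eq_dim]; simp
  have hcp : M.charpoly = Polynomial.X ^ N := by
    apply Polynomial.ext
    intro j
    rcases lt_trichotomy j N with hj | rfl | hj
    · have hrc : M.charpoly.reverse.coeff (N - j) = M.charpoly.coeff j := by
        rw [Polynomial.coeff_reverse, hdim, Polynomial.revAt_le (by omega),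
          (by omega : N - (N - j) = j)]
      rw [← hrc, hrev, Polynomial.coeff_one, if_neg (by omega),
        Polynomial.coeff_X_pow, if_neg (by omega)]
    · rw [Polynomial.coeff_X_pow, if_pos rfl]
      have hm := (Matrix.charpoly_monic M).coeff_natDegree
      rw [hdim] at hm
      exact hm
    · rw [Polynomial.coeff_X_pow, if_neg (by omega),
        Polynomial.coeff_eq_zero_of_natDegree_lt (by omega)]
  have hCH := Matrix.aeval_self_charpoly M
  rw [hcp, map_pow, Polynomial.aeval_X] at hCH
  exact hCH

end ALAux2

namespace ALRosset

open ExteriorAlgebra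

variable {R : Type*} [CommRing R]

lemma nsmul_cancel [Algebra ℚ R] {M : Type*} [AddCommGroup M] [Module R M] {k : ℕ} (hk : k ≠ 0)
    {x : M} (h : k • x = 0) : x = 0 := by
  have h2 : ((k : R)) • x = 0 := by rw [Nat.cast_smul_eq_nsmul]; exact h
  have h3 := congrArg (fun y => (algebraMap ℚ R (k : ℚ)⁻¹) • y) h2
  simp only [smul_smul, smul_zero] at h3
  rw [← map_natCast (algebraMap ℚ R) k, ← map_mul,
    inv_mul_cancel₀ (Nat.cast_ne_zero.mpr hk), map_one, one_smul] at h3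
  exact h3

variable {m : ℕ}

local notation "E" => ExteriorAlgebra R (Fin m → R)

lemma iota_anticomm (x y : Fin m → R) :
    ExteriorAlgebra.ι R x * ExteriorAlgebra.ι R y = -(ExteriorAlgebra.ι R y * ExteriorAlgebra.ι R x) := by
  have h := ExteriorAlgebra.ι_sq_zero (R := R) (x + y)
  rw [map_add, add_mul, mul_add, mul_add, ExteriorAlgebra.ι_sq_zero,
    ExteriorAlgebra.ι_sq_zero, zero_add, add_zero] at h
  exact eq_neg_of_add_eq_zero_left h

lemma pair_mem_center (x y : Fin m → R) :
    ExteriorAlgebra.ι R x * ExteriorAlgebra.ι R y ∈ Subring.center E := by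
  rw [Subring.mem_center_iff]
  intro g
  induction g using ExteriorAlgebra.induction with
  | algebraMap r => rw [← Algebra.commutes r (ι R x * ι R y)]
  | ι z =>
      rw [← mul_assoc, iota_anticomm z x, neg_mul, mul_assoc, iota_anticomm z y,
        mul_neg, neg_neg, ← mul_assoc, mul_assoc]
  | mul a b ha hb => rw [mul_assoc, hb, ← mul_assoc, ha, mul_assoc]
  | add a b ha hb => rw [add_mul, mul_add, ha, hb]

lemma algmap_mem_center (r : R) : algebraMap R E r ∈ Subring.center E := by
  rw [Subring.mem_center_iff]
  intro g
  exact (Algebra.commutes r g).symm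

section Main

variable (n : ℕ) (X : Fin (2 * n) → Matrix (Fin n) (Fin n) R)

local notation "EE" => ExteriorAlgebra R (Fin (2 * n) → R)

/-- standard basis vectors -/
def bs : Fin (2 * n) → (Fin (2 * n) → R) := fun k => Pi.single k 1

/-- generators -/
def ee (k : Fin (2 * n)) : EE := ExteriorAlgebra.ι R (bs n k)

/-- scalar matrices over the exterior algebra -/
def sc (s : EE) : Matrix (Fin n) (Fin n) EE := Matrix.diagonal fun _ => s

lemma sc_mul_sc (s t : EE) : sc n s * sc n t = sc n (s * t) := by
  simp [sc, Matrix.diagonal_mul_diagonal]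

lemma sc_one : sc (R := R) n 1 = 1 := Matrix.diagonal_one

/-- word products of the matrices -/
def wp (L : ℕ) (w : Fin L → Fin (2 * n)) : Matrix (Fin n) (Fin n) R :=
  (List.ofFn fun i => X (w i)).prod

/-- word products of the generators -/
def ep (L : ℕ) (w : Fin L → Fin (2 * n)) : EE :=
  (List.ofFn fun i => ee n (w i)).prod

lemma ep_eq_iMulti (L : ℕ) (w : Fin L → Fin (2 * n)) :
    ep n L w = ExteriorAlgebra.ιMulti R L (fun i => bs n (w i)) :=
  (ExteriorAlgebra.ιMulti_apply _).symm

lemma ep_rotate (L : ℕ) (w : Fin (L + 1) → Fin (2 * n)) :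
    ep (R := R) n (L + 1) (w ∘ finRotate (L + 1))
      = Equiv.Perm.sign (finRotate (L + 1)) • ep (R := R) n (L + 1) w := by
  rw [ep_eq_iMulti, ep_eq_iMulti]
  have := AlternatingMap.map_perm (ExteriorAlgebra.ιMulti R (L + 1) (M := Fin (2 * n) → R))
    (fun i => bs n (w i)) (finRotate (L + 1))
  exact this

lemma ep_zero (L : ℕ) (w : Fin L → Fin (2 * n)) (hw : ¬ Function.Injective w) :
    ep (R := R) n L w = 0 := by
  rw [ep_eq_iMulti]
  obtain ⟨a, b, hab, hne⟩ := Function.not_injective_iff.mp hw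
  exact AlternatingMap.map_eq_zero_of_eq _ _ (by rw [hab]) hne

/-- the Rosset matrix -/
def A : Matrix (Fin n) (Fin n) EE :=
  ∑ k, (X k).map (algebraMap R EE) * sc n (ee n k)

lemma sc_mul_map (s : EE) (Y : Matrix (Fin n) (Fin n) R) :
    sc n s * Y.map (algebraMap R EE) = Y.map (algebraMap R EE) * sc n s := by
  ext i j
  rw [sc, Matrix.diagonal_mul, Matrix.mul_diagonal]
  exact (Algebra.commutes (Y i j) s).symm

lemma key_prod (L : ℕ) (w : Fin L → Fin (2 * n)) :
    (List.ofFn fun i => (X (w i)).map (algebraMap R EE) * sc n (ee n (w i))).prod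
      = (wp n X L w).map (algebraMap R EE) * sc n (ep n L w) := by
  induction L with
  | zero =>
      simp only [List.ofFn_zero, List.prod_nil, wp, ep]
      rw [Matrix.map_one _ (map_zero _) (map_one _), sc_one, one_mul]
  | succ L ih =>
      rw [List.ofFn_succ, List.prod_cons, ih (fun i => w i.succ)]
      have h1 : wp n X (L + 1) w = X (w 0) * wp n X L (fun i => w i.succ) := by
        rw [wp, wp, List.ofFn_succ, List.prod_cons]
      have h2 : ep (R := R) n (L + 1) w = ee (R := R) n (w 0) * ep (R := R) n L (fun i => w i.succ) := by
        rw [ep, ep, List.ofFn_succ, List.prod_cons]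
      rw [h1, h2, ← sc_mul_sc, Matrix.map_mul]
      rw [mul_assoc ((X (w 0)).map (algebraMap R EE))]
      rw [← mul_assoc (sc n (ee n (w 0))), sc_mul_map, mul_assoc, mul_assoc]

lemma A_pow (L : ℕ) :
    A n X ^ L = ∑ w : Fin L → Fin (2 * n),
      (wp n X L w).map (algebraMap R EE) * sc n (ep n L w) := by
  rw [A, ALAux.sum_pow_expand]
  exact Finset.sum_congr rfl fun w _ => key_prod n X L w

lemma trace_map_alg (Y : Matrix (Fin n) (Fin n) R) :
    Matrix.trace (Y.map (algebraMap R EE)) = algebraMap R EE (Matrix.trace Y) := by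
  simp [Matrix.trace, Matrix.diag, Matrix.map_apply]

lemma trace_A_pow (L : ℕ) :
    Matrix.trace (A n X ^ L) = ∑ w : Fin L → Fin (2 * n),
      algebraMap R EE (Matrix.trace (wp n X L w)) * ep n L w := by
  rw [A_pow, Matrix.trace_sum]
  refine Finset.sum_congr rfl fun w _ => ?_
  rw [Matrix.trace]
  rw [show ∑ i, Matrix.diag ((wp n X L w).map (algebraMap R EE) * sc n (ep n L w)) i
    = ∑ i, algebraMap R EE ((wp n X L w) i i) * ep n L w from
    Finset.sum_congr rfl fun i _ => by
      rw [Matrix.diag, sc, Matrix.mul_diagonal, Matrix.map_apply]]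
  rw [← Finset.sum_mul, ← map_sum]
  rfl

lemma trace_wp_rotate (L : ℕ) (w : Fin (L + 1) → Fin (2 * n)) :
    Matrix.trace (wp n X (L + 1) (w ∘ finRotate (L + 1))) = Matrix.trace (wp n X (L + 1) w) := by
  have hlist : (List.ofFn fun i => X ((w ∘ finRotate (L + 1)) i))
      = (List.ofFn fun i : Fin L => X (w i.succ)).concat (X (w 0)) := by
    rw [List.ofFn_succ']
    congr 1
    · refine congrArg List.ofFn (funext fun i => ?_)
      simp only [Function.comp_apply, finRotate_succ_apply, Fin.coeSucc_eq_succ]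
    · simp
  rw [wp, hlist, List.prod_concat, wp, List.ofFn_succ, List.prod_cons, Matrix.trace_mul_comm]

lemma trace_A_pow_even [Algebra ℚ R] (M : ℕ) (hM : 1 ≤ M) :
    Matrix.trace (A n X ^ (2 * M)) = 0 := by
  obtain ⟨M', rfl⟩ : ∃ M', M = M' + 1 := ⟨M - 1, by omega⟩
  have hL : 2 * (M' + 1) = (2 * M' + 1) + 1 := by ring
  rw [hL, trace_A_pow]
  set L := 2 * M' + 1 with hLdef
  set T := ∑ w : Fin (L + 1) → Fin (2 * n),
    algebraMap R EE (Matrix.trace (wp n X (L + 1) w)) * ep n (L + 1) w with hT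
  have hre : T = ∑ w : Fin (L + 1) → Fin (2 * n),
      algebraMap R EE (Matrix.trace (wp n X (L + 1) (w ∘ finRotate (L + 1))))
        * ep n (L + 1) (w ∘ finRotate (L + 1)) := by
    rw [hT]
    refine Fintype.sum_equiv
      (Equiv.arrowCongr (finRotate (L + 1)) (Equiv.refl (Fin (2 * n)))) _ _ fun w => ?_
    have hw : (Equiv.arrowCongr (finRotate (L + 1)) (Equiv.refl (Fin (2 * n)))) w
        = w ∘ (finRotate (L + 1)).symm := rfl
    rw [hw]
    have hcomp : (w ∘ (finRotate (L + 1)).symm) ∘ finRotate (L + 1) = w := by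
      funext i; simp only [Function.comp_apply, Equiv.symm_apply_apply]
    rw [hcomp]
  have hterm : ∀ w : Fin (L + 1) → Fin (2 * n),
      algebraMap R EE (Matrix.trace (wp n X (L + 1) (w ∘ finRotate (L + 1))))
        * ep n (L + 1) (w ∘ finRotate (L + 1))
      = - (algebraMap R EE (Matrix.trace (wp n X (L + 1) w)) * ep n (L + 1) w) := by
    intro w
    rw [trace_wp_rotate, ep_rotate, sign_finRotate]
    have hodd : Odd L := ⟨M', by omega⟩
    rw [Nat.add_sub_cancel, hodd.neg_one_pow]
    simp [Units.smul_def, mul_neg]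
  have hneg : T = -T := by
    calc T = ∑ w : Fin (L + 1) → Fin (2 * n),
        -(algebraMap R EE (Matrix.trace (wp n X (L + 1) w)) * ep n (L + 1) w) := by
          rw [hre]; exact Finset.sum_congr rfl fun w _ => hterm w
    _ = -T := by rw [hT, Finset.sum_neg_distrib]
  have h2 : (2 : ℕ) • T = 0 := by
    rw [two_smul]
    nth_rewrite 2 [hneg]
    exact add_neg_cancel T
  exact nsmul_cancel (R := R) (by norm_num) h2

lemma entries_central (i j : Fin n) : (A n X ^ 2) i j ∈ Subring.center EE := by
  rw [A_pow, Matrix.sum_apply]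
  apply sum_mem
  intro w _
  have hentry : ((wp n X 2 w).map (algebraMap R EE) * sc (R := R) n (ep (R := R) n 2 w)) i j
      = algebraMap R EE ((wp n X 2 w) i j) * ep (R := R) n 2 w := by
    rw [sc, Matrix.mul_diagonal, Matrix.map_apply]
  rw [hentry]
  have hep : ep (R := R) n 2 w = ee n (w 0) * ee n (w 1) := by
    simp [ep, List.ofFn_succ]
  rw [hep]
  exact Subring.mul_mem _ (algmap_mem_center _) (pair_mem_center _ _)

lemma trace_map_subring {C : Type*} [Ring C] (s : Subring C)
    (Y : Matrix (Fin n) (Fin n) s) :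
    Matrix.trace (Y.map s.subtype) = s.subtype (Matrix.trace Y) := by
  simp [Matrix.trace, Matrix.diag, Matrix.map_apply]

lemma A_pow_eq_zero [Algebra ℚ R] [Nontrivial R] : A n X ^ (2 * n) = 0 := by
  haveI : Nontrivial EE := by
    refine ⟨1, 0, fun h => one_ne_zero (α := R) ?_⟩
    have hinj := (ExteriorAlgebra.algebraMap_leftInverse (R := R)
      (M := Fin (2 * n) → R)).injective
    apply hinj
    rw [map_one, map_zero]
    exact h
  haveI : Nontrivial (Subring.center EE) := by
    refine ⟨1, 0, fun h => one_ne_zero (α := EE) ?_⟩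
    exact congrArg Subtype.val h
  set B : Matrix (Fin n) (Fin n) (Subring.center EE) :=
    Matrix.of fun i j => (⟨(A n X ^ 2) i j, entries_central n X i j⟩ : Subring.center EE) with hB
  have hBval : B.map (Subring.center EE).subtype = A n X ^ 2 := by
    ext i j; rfl
  have hmap : ∀ m : ℕ, (B ^ m).map (Subring.center EE).subtype = (A n X ^ 2) ^ m := by
    intro m
    have h0 := map_pow ((Subring.center EE).subtype.mapMatrix) B m
    rw [RingHom.mapMatrix_apply] at h0
    rw [h0, RingHom.mapMatrix_apply, hBval]
  have htf : ∀ (k : ℕ), k ≠ 0 → ∀ x : Subring.center EE, (k : Subring.center EE) * x = 0 → x = 0 := by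
    intro k hk x hx
    have h1 : (k : ℕ) • x = 0 := by
      rw [nsmul_eq_mul]; exact_mod_cast hx
    have h2 : (k : ℕ) • (x : EE) = 0 := by
      have := congrArg Subtype.val h1
      simpa using this
    exact Subtype.ext (nsmul_cancel (R := R) hk h2)
  have htr : ∀ m : ℕ, 1 ≤ m → m ≤ n → Matrix.trace (B ^ m) = 0 := by
    intro m h1 _
    have hv : (Subring.center EE).subtype (Matrix.trace (B ^ m))
        = Matrix.trace (A n X ^ (2 * m)) := by
      rw [← trace_map_subring, hmap m, ← pow_mul]
    rw [trace_A_pow_even n X m h1] at hv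
    exact Subtype.ext hv
  have hBn := ALAux2.pow_card_eq_zero_of_trace_pow htf B htr
  have hfin : (A n X ^ 2) ^ n = 0 := by
    rw [← hmap n, hBn]
    ext i j
    simp
  rw [pow_mul]
  exact hfin

lemma top_regular (a : R)
    (h : algebraMap R EE a * ExteriorAlgebra.ιMulti R (2 * n) (bs n) = 0) : a = 0 := by
  set f : ∀ i : ℕ, (Fin (2 * n) → R) [⋀^Fin i]→ₗ[R] R :=
    Function.update (fun _ => 0) (2 * n) (Matrix.detRowAlternating) with hf
  have hF := congrArg (ExteriorAlgebra.liftAlternating (R := R) f) h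
  rw [map_zero, ← Algebra.smul_def, map_smul,
    ExteriorAlgebra.liftAlternating_apply_ιMulti] at hF
  have hupd : f (2 * n) = Matrix.detRowAlternating := Function.update_self _ _ _
  rw [hupd] at hF
  have hdet : (Matrix.detRowAlternating (n := Fin (2 * n)) (R := R)) (bs n) = 1 := by
    have hone : (Matrix.of (bs n) : Matrix (Fin (2 * n)) (Fin (2 * n)) R) = 1 := by
      ext i j
      simp [bs, Matrix.one_apply, Pi.single_apply, eq_comm]
    calc (Matrix.detRowAlternating (n := Fin (2 * n)) (R := R)) (bs n)
        = (Matrix.of (bs n) : Matrix (Fin (2 * n)) (Fin (2 * n)) R).det := rfl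
    _ = 1 := by rw [hone, Matrix.det_one]
  rw [hdet, smul_eq_mul, mul_one] at hF
  exact hF

theorem AL_ring [Algebra ℚ R] [Nontrivial R] :
    ∑ σ : Equiv.Perm (Fin (2 * n)), (Equiv.Perm.sign σ : ℤ) • (List.ofFn fun i => X (σ i)).prod
      = 0 := by
  have hA := A_pow_eq_zero n X
  rw [A_pow] at hA
  have hz : ∀ w ∈ Finset.univ.filter (fun w : Fin (2 * n) → Fin (2 * n) => ¬ Function.Injective w),
      (wp n X (2 * n) w).map (algebraMap R EE) * sc n (ep n (2 * n) w) = 0 := by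
    intro w hw
    rw [ep_zero n (2 * n) w (Finset.mem_filter.mp hw).2]
    rw [sc, Matrix.diagonal_zero, mul_zero]
  rw [← Finset.sum_filter_add_sum_filter_not Finset.univ
    (fun w : Fin (2 * n) → Fin (2 * n) => Function.Injective w), Finset.sum_eq_zero hz,
    add_zero] at hA
  have hbij : ∑ w ∈ Finset.univ.filter
        (fun w : Fin (2 * n) → Fin (2 * n) => Function.Injective w),
        (wp n X (2 * n) w).map (algebraMap R EE) * sc n (ep n (2 * n) w)
      = ∑ σ : Equiv.Perm (Fin (2 * n)),
        (wp n X (2 * n) ⇑σ).map (algebraMap R EE) * sc n (ep n (2 * n) ⇑σ) := by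
    refine Finset.sum_bij'
      (fun w hw => Equiv.ofBijective w
        (Finite.injective_iff_bijective.mp (Finset.mem_filter.mp hw).2))
      (fun σ _ => ⇑σ) ?_ ?_ ?_ ?_ ?_
    · intro w hw; exact Finset.mem_univ _
    · intro σ _
      exact Finset.mem_filter.mpr ⟨Finset.mem_univ _, σ.injective⟩
    · intro w hw; rfl
    · intro σ _
      exact Equiv.ext fun i => rfl
    · intro w hw; rfl
  rw [hbij] at hA
  -- now rewrite each term using the sign of the permutation
  have hterm : ∀ σ : Equiv.Perm (Fin (2 * n)),
      (wp n X (2 * n) ⇑σ).map (algebraMap R EE) * sc n (ep n (2 * n) ⇑σ)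
      = (((Equiv.Perm.sign σ : ℤ) • wp n X (2 * n) ⇑σ).map (algebraMap R EE))
          * sc n (ExteriorAlgebra.ιMulti R (2 * n) (bs n)) := by
    intro σ
    rw [ep_eq_iMulti]
    have hcomp : (fun i => bs (R := R) n (σ i)) = (bs (R := R) n) ∘ ⇑σ := rfl
    rw [hcomp, AlternatingMap.map_perm]
    have hsmulmap : (((Equiv.Perm.sign σ : ℤ) • wp n X (2 * n) ⇑σ).map (algebraMap R EE))
        = (Equiv.Perm.sign σ : ℤ) • (wp n X (2 * n) ⇑σ).map (algebraMap R EE) := by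
      ext i j
      simp only [Matrix.map_apply, Matrix.smul_apply, map_zsmul]
    rw [hsmulmap]
    have hscsmul : sc n ((Equiv.Perm.sign σ) • ExteriorAlgebra.ιMulti R (2 * n) (bs n))
        = (Equiv.Perm.sign σ : ℤ) • sc n (ExteriorAlgebra.ιMulti R (2 * n) (bs n)) := by
      ext i j
      simp [sc, Matrix.diagonal_apply, Units.smul_def]
    rw [hscsmul, mul_smul_comm, ← smul_mul_assoc]
  rw [Finset.sum_congr rfl fun σ _ => hterm σ] at hA
  have hfac : ∑ σ : Equiv.Perm (Fin (2 * n)),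
      (((Equiv.Perm.sign σ : ℤ) • wp n X (2 * n) ⇑σ).map (algebraMap R EE))
        * sc n (ExteriorAlgebra.ιMulti R (2 * n) (bs n))
      = ((∑ σ : Equiv.Perm (Fin (2 * n)), (Equiv.Perm.sign σ : ℤ) • wp n X (2 * n) ⇑σ).map
          (algebraMap R EE)) * sc n (ExteriorAlgebra.ιMulti R (2 * n) (bs n)) := by
    rw [← Finset.sum_mul]
    congr 1
    ext i j
    rw [Matrix.map_apply, Matrix.sum_apply, Matrix.sum_apply, map_sum]
    refine Finset.sum_congr rfl fun σ _ => ?_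
    rw [Matrix.map_apply]
  rw [hfac] at hA
  show ∑ σ : Equiv.Perm (Fin (2 * n)), (Equiv.Perm.sign σ : ℤ) • wp n X (2 * n) ⇑σ = 0
  ext i j
  have hentry : (((∑ σ : Equiv.Perm (Fin (2 * n)),
      (Equiv.Perm.sign σ : ℤ) • wp n X (2 * n) ⇑σ).map (algebraMap R EE))
        * sc n (ExteriorAlgebra.ιMulti R (2 * n) (bs n))) i j = 0 := by
    rw [hA]; rfl
  rw [sc, Matrix.mul_diagonal, Matrix.map_apply] at hentry
  have := top_regular n _ hentry
  rw [this]
  rfl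

end Main

end ALRosset

namespace ALFinal

lemma map_sum_prod {S₁ S₂ : Type*} [CommSemiring S₁] [CommSemiring S₂] (f : S₁ →+* S₂)
    (n : ℕ) (Y : Fin (2 * n) → Matrix (Fin n) (Fin n) S₁)
    (s : Finset (Equiv.Perm (Fin (2 * n)))) :
    (∑ σ ∈ s, (List.ofFn fun i => Y (σ i)).prod).map f
      = ∑ σ ∈ s, (List.ofFn fun i => (Y (σ i)).map f).prod := by
  have h1 := map_sum (f.mapMatrix (m := Fin n))
    (fun σ => (List.ofFn fun i => Y (σ i)).prod) s
  rw [RingHom.mapMatrix_apply] at h1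
  rw [h1]
  refine Finset.sum_congr rfl fun σ _ => ?_
  have h2 := map_list_prod (f.mapMatrix (m := Fin n)) (List.ofFn fun i => Y (σ i))
  rw [h2, List.map_ofFn]
  rfl

lemma ring_version {R : Type*} [CommRing R] [Algebra ℚ R] [Nontrivial R] (n : ℕ)
    (Z : Fin (2 * n) → Matrix (Fin n) (Fin n) R) :
    ∑ σ ∈ Finset.univ.filter (fun σ : Equiv.Perm (Fin (2 * n)) => Equiv.Perm.sign σ = 1),
        (List.ofFn fun i => Z (σ i)).prod
    = ∑ σ ∈ Finset.univ.filter (fun σ : Equiv.Perm (Fin (2 * n)) => Equiv.Perm.sign σ = -1),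
        (List.ofFn fun i => Z (σ i)).prod := by
  have h := ALRosset.AL_ring n Z
  rw [← Finset.sum_filter_add_sum_filter_not Finset.univ
    (fun σ : Equiv.Perm (Fin (2 * n)) => Equiv.Perm.sign σ = 1)] at h
  have h1 : ∑ σ ∈ Finset.univ.filter
        (fun σ : Equiv.Perm (Fin (2 * n)) => Equiv.Perm.sign σ = 1),
      (Equiv.Perm.sign σ : ℤ) • (List.ofFn fun i => Z (σ i)).prod
      = ∑ σ ∈ Finset.univ.filter
        (fun σ : Equiv.Perm (Fin (2 * n)) => Equiv.Perm.sign σ = 1),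
      (List.ofFn fun i => Z (σ i)).prod := by
    refine Finset.sum_congr rfl fun σ hσ => ?_
    rw [(Finset.mem_filter.mp hσ).2]
    simp
  have h2 : ∑ σ ∈ Finset.univ.filter
        (fun σ : Equiv.Perm (Fin (2 * n)) => ¬ Equiv.Perm.sign σ = 1),
      (Equiv.Perm.sign σ : ℤ) • (List.ofFn fun i => Z (σ i)).prod
      = - ∑ σ ∈ Finset.univ.filter
        (fun σ : Equiv.Perm (Fin (2 * n)) => Equiv.Perm.sign σ = -1),
      (List.ofFn fun i => Z (σ i)).prod := by
    rw [← Finset.sum_neg_distrib]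
    refine Finset.sum_congr ?_ fun σ hσ => ?_
    · refine Finset.filter_congr fun σ _ => ?_
      rcases Int.units_eq_one_or (Equiv.Perm.sign σ) with hs | hs <;> simp [hs]
    · have hs : Equiv.Perm.sign σ = -1 := (Finset.mem_filter.mp hσ).2
      rw [hs]
      simp
  rw [h1, h2] at h
  exact add_neg_eq_zero.mp h

theorem main {S : Type*} [CommSemiring S] (n : ℕ)
    (X : Fin (2 * n) → Matrix (Fin n) (Fin n) S) :
    ∑ σ ∈ Finset.univ.filter (fun σ : Equiv.Perm (Fin (2 * n)) => Equiv.Perm.sign σ = 1),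
        (List.ofFn fun i => X (σ i)).prod
    = ∑ σ ∈ Finset.univ.filter (fun σ : Equiv.Perm (Fin (2 * n)) => Equiv.Perm.sign σ = -1),
        (List.ofFn fun i => X (σ i)).prod := by
  set ι := Fin (2 * n) × Fin n × Fin n
  set Y : Fin (2 * n) → Matrix (Fin n) (Fin n) (MvPolynomial ι ℕ) :=
    fun k => Matrix.of fun i j => MvPolynomial.X (k, i, j) with hY
  set θ : MvPolynomial ι ℕ →+* MvPolynomial ι ℚ :=
    (MvPolynomial.map (Nat.castRingHom ℚ)) with hθdef
  have hθ : Function.Injective θ := MvPolynomial.map_injective _ Nat.cast_injective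
  set φ : MvPolynomial ι ℕ →+* S :=
    MvPolynomial.eval₂Hom (Nat.castRingHom S) (fun v => X v.1 v.2.1 v.2.2) with hφdef
  have hYX : ∀ k, (Y k).map φ = X k := by
    intro k
    ext i j
    simp [hY, Matrix.map_apply, hφdef]
  -- the identity over the polynomial semiring
  have key₀ : ∑ σ ∈ Finset.univ.filter
        (fun σ : Equiv.Perm (Fin (2 * n)) => Equiv.Perm.sign σ = 1),
        (List.ofFn fun i => Y (σ i)).prod
      = ∑ σ ∈ Finset.univ.filter
        (fun σ : Equiv.Perm (Fin (2 * n)) => Equiv.Perm.sign σ = -1),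
        (List.ofFn fun i => Y (σ i)).prod := by
    have hinj : Function.Injective
        (fun M : Matrix (Fin n) (Fin n) (MvPolynomial ι ℕ) => M.map θ) := by
      intro M N hMN
      refine Matrix.ext fun i j => ?_
      exact hθ (congrFun (congrFun hMN i) j)
    apply hinj
    simp only [map_sum_prod]
    exact ring_version n (fun k => (Y k).map θ)
  have hgoal := congrArg (fun M => M.map φ) key₀
  simp only [map_sum_prod] at hgoal
  calc ∑ σ ∈ Finset.univ.filter
        (fun σ : Equiv.Perm (Fin (2 * n)) => Equiv.Perm.sign σ = 1),
        (List.ofFn fun i => X (σ i)).prod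
      = ∑ σ ∈ Finset.univ.filter
        (fun σ : Equiv.Perm (Fin (2 * n)) => Equiv.Perm.sign σ = 1),
        (List.ofFn fun i => (Y (σ i)).map φ).prod := by
        refine Finset.sum_congr rfl fun σ _ => ?_
        congr 1
        exact congrArg List.ofFn (funext fun i => (hYX (σ i)).symm)
  _ = ∑ σ ∈ Finset.univ.filter
        (fun σ : Equiv.Perm (Fin (2 * n)) => Equiv.Perm.sign σ = -1),
        (List.ofFn fun i => (Y (σ i)).map φ).prod := hgoal
  _ = ∑ σ ∈ Finset.univ.filter
        (fun σ : Equiv.Perm (Fin (2 * n)) => Equiv.Perm.sign σ = -1),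
        (List.ofFn fun i => X (σ i)).prod := by
        refine Finset.sum_congr rfl fun σ _ => ?_
        congr 1
        exact congrArg List.ofFn (funext fun i => hYX (σ i))

end ALFinal

/-- Semiring form of the Amitsur–Levitzki standard identity: for any `2n` matrices of
size `n×n` over a commutative semiring, the sum of the products `X_{σ(1)}···X_{σ(2n)}`
over even permutations equals the sum over odd permutations. -/
theorem amitsur_levitzki_semiring {S : Type*} [CommSemiring S] (n : ℕ)
    (X : Fin (2 * n) → Matrix (Fin n) (Fin n) S) :
    ∑ σ ∈ Finset.univ.filter (fun σ : Equiv.Perm (Fin (2 * n)) => Equiv.Perm.sign σ = 1),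
        (List.ofFn fun i => X (σ i)).prod
    = ∑ σ ∈ Finset.univ.filter (fun σ : Equiv.Perm (Fin (2 * n)) => Equiv.Perm.sign σ = -1),
        (List.ofFn fun i => X (σ i)).prod := by
  exact ALFinal.main n X
end
end

section
/- Max-plus Radon theorem: every family of n+1 vectors in R_max^n is linearly dependent in the Gondran–Minoux sense; that is, for any v_1,...,v_{n+1} ∈ R_max^n there exist disjoint sets I, J with I ∪ J = {1,...,n+1} and scalars α_1,...,α_{n+1} ∈ R_max not all equal to -∞ such that ⊕_{i∈I} α_i ⊙ v_i = ⊕_{j∈J} α_j ⊙ v_j (equality of vectors in R_max^n, entrywise max-plus combinations). -/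
open scoped Classical

noncomputable section

namespace MaxplusRadonAux

open Finset

/-! ### Generic `WithBot` helper lemmas -/

lemma sum_ne_bot {W : Type*} [AddCommMonoid W] {ι : Type*} (s : Finset ι) (f : ι → WithBot W)
    (h : ∀ x ∈ s, f x ≠ ⊥) : ∑ x ∈ s, f x ≠ ⊥ := by
  induction s using Finset.cons_induction with
  | empty => simp
  | cons a s ha ih =>
    rw [Finset.sum_cons]
    exact WithBot.add_ne_bot.mpr ⟨h a (Finset.mem_cons_self a s),
      ih fun x hx => h x (Finset.mem_cons_of_mem hx)⟩

lemma sum_eq_bot_of_mem {W : Type*} [AddCommMonoid W] {ι : Type*} {s : Finset ι}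
    {f : ι → WithBot W} {a : ι} (ha : a ∈ s) (hb : f a = ⊥) : ∑ x ∈ s, f x = ⊥ := by
  rw [← Finset.add_sum_erase _ _ ha, hb, WithBot.bot_add]

section Core

variable {m : ℕ}

/-- The value group: lexicographic `ℝ^(m+1)`; slot `0` carries the true value,
slot `j.succ` records the column chosen in row `j`. -/
def V (m : ℕ) := Lex (Fin (m + 1) → ℝ)

noncomputable instance : AddCommGroup (V m) :=
  inferInstanceAs (AddCommGroup (Lex (Fin (m + 1) → ℝ)))

noncomputable instance : LinearOrder (V m) :=
  inferInstanceAs (LinearOrder (Lex (Fin (m + 1) → ℝ)))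

instance : IsOrderedAddMonoid (V m) :=
  inferInstanceAs (IsOrderedAddMonoid (Lex (Fin (m + 1) → ℝ)))

def base (j : Fin m) (k : Fin (m + 1)) (x : ℝ) : V m :=
  toLex fun s => if s = 0 then x else if s = j.succ then (k.val : ℝ) else 0

/-- evaluation at a slot, as an additive monoid hom. -/
def evalHom (s : Fin (m + 1)) : V m →+ ℝ where
  toFun v := ofLex v s
  map_zero' := rfl
  map_add' _ _ := rfl

lemma fst_mono : Monotone fun v : V m => (evalHom 0) v := by
  intro a b hab
  rcases eq_or_lt_of_le hab with rfl | h
  · exact le_rfl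
  · obtain ⟨i, hj, hi⟩ := (id h : Pi.Lex (· < ·) (@fun _ => (· < ·)) (ofLex a) (ofLex b))
    rcases eq_or_ne i 0 with rfl | h0
    · exact le_of_lt hi
    · exact le_of_eq (hj 0 (Fin.pos_of_ne_zero h0))

def p (m : ℕ) : WithBot (V m) → WithBot ℝ := WithBot.map fun v => (evalHom 0) v

lemma p_bot : p m ⊥ = ⊥ := rfl

lemma p_add (a b : WithBot (V m)) : p m (a + b) = p m a + p m b :=
  WithBot.map_add (evalHom 0) a b

lemma p_max (a b : WithBot (V m)) : p m (a ⊔ b) = p m a ⊔ p m b :=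
  Monotone.map_max (fst_mono.withBot_map)

lemma p_sup {ι : Type*} (s : Finset ι) (f : ι → WithBot (V m)) :
    p m (s.sup f) = s.sup fun x => p m (f x) :=
  Finset.comp_sup_eq_sup_comp _ p_max rfl

lemma p_eq_bot {a : WithBot (V m)} : p m a = ⊥ ↔ a = ⊥ := WithBot.map_eq_bot_iff

lemma eval_base_succ (j j' : Fin m) (k : Fin (m+1)) (x : ℝ) :
    (evalHom j.succ) (base j' k x) = if j = j' then (k.val : ℝ) else 0 := by
  have h0 : (j.succ : Fin (m+1)) ≠ 0 := Fin.succ_ne_zero j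
  change ofLex (base j' k x) j.succ = _
  simp only [evalHom, base, AddMonoidHom.coe_mk, ZeroHom.coe_mk, ofLex_toLex, h0, if_false,
    Fin.succ_inj]

variable (A : Fin m → Fin (m + 1) → WithBot ℝ)

def pA (j : Fin m) (k : Fin (m + 1)) : WithBot (V m) := (A j k).map (base j k)

lemma p_pA (j : Fin m) (k : Fin (m + 1)) : p m (pA A j k) = A j k := by
  cases hA : A j k with
  | bot => simp [p, pA, hA]
  | coe x =>
    simp only [p, pA, hA, WithBot.map_coe, WithBot.coe_inj]
    change ofLex (base j k x) 0 = x
    simp [evalHom, base]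

def w (τ : Equiv.Perm (Fin (m + 1))) : WithBot (V m) := ∑ j : Fin m, pA A j (τ j.castSucc)

def Pk (m : ℕ) (k : Fin (m + 1)) : Finset (Equiv.Perm (Fin (m + 1))) :=
  univ.filter fun τ => τ (Fin.last m) = k

lemma Pk_nonempty (k : Fin (m + 1)) : (Pk m k).Nonempty :=
  ⟨Equiv.swap (Fin.last m) k, by simp [Pk, Equiv.swap_apply_left]⟩

lemma mem_Pk {k : Fin (m + 1)} {τ : Equiv.Perm (Fin (m + 1))} :
    τ ∈ Pk m k ↔ τ (Fin.last m) = k := by simp [Pk]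

def aDot (k : Fin (m + 1)) : WithBot (V m) := (Pk m k).sup (w A)

def tc (k : Fin (m + 1)) : Equiv.Perm (Fin (m + 1)) :=
  Classical.choose (Finset.exists_mem_eq_sup (Pk m k) (Pk_nonempty k) (w A))

lemma tc_mem (k : Fin (m + 1)) : tc A k ∈ Pk m k :=
  (Classical.choose_spec (Finset.exists_mem_eq_sup (Pk m k) (Pk_nonempty k) (w A))).1

lemma tc_last (k : Fin (m + 1)) : (tc A k) (Fin.last m) = k := mem_Pk.mp (tc_mem A k)

lemma tc_w (k : Fin (m + 1)) : aDot A k = w A (tc A k) :=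
  (Classical.choose_spec (Finset.exists_mem_eq_sup (Pk m k) (Pk_nonempty k) (w A))).2

lemma w_ne_bot_term {τ : Equiv.Perm (Fin (m + 1))} (h : w A τ ≠ ⊥) (j : Fin m) :
    pA A j (τ j.castSucc) ≠ ⊥ :=
  fun hb => h (sum_eq_bot_of_mem (mem_univ j) hb)

lemma w_coe {τ : Equiv.Perm (Fin (m + 1))} (hne : w A τ ≠ ⊥) :
    ∃ a : Fin m → ℝ, (∀ j, A j (τ j.castSucc) = ↑(a j)) ∧
      w A τ = ↑(∑ j : Fin m, base j (τ j.castSucc) (a j)) := by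
  have h1 : ∀ j : Fin m, ∃ x : ℝ, A j (τ j.castSucc) = ↑x := by
    intro j
    have h2 := w_ne_bot_term A hne j
    rw [pA, ne_eq, WithBot.map_eq_bot_iff] at h2
    obtain ⟨x, hx⟩ := WithBot.ne_bot_iff_exists.mp h2
    exact ⟨x, hx.symm⟩
  choose a ha using h1
  refine ⟨a, ha, ?_⟩
  calc w A τ = ∑ j : Fin m, (↑(base j (τ j.castSucc) (a j)) : WithBot (V m)) :=
        Finset.sum_congr rfl fun j _ => by rw [pA, ha j, WithBot.map_coe]
    _ = _ := (WithBot.coe_sum _ _).symm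

lemma w_inj {k : Fin (m + 1)} {τ τ' : Equiv.Perm (Fin (m + 1))}
    (hτ : τ ∈ Pk m k) (hτ' : τ' ∈ Pk m k) (hne : w A τ ≠ ⊥) (h : w A τ = w A τ') : τ = τ' := by
  obtain ⟨a, _, ea⟩ := w_coe A hne
  obtain ⟨b, _, eb⟩ := w_coe A (h ▸ hne)
  rw [ea, eb, WithBot.coe_inj] at h
  have hval : ∀ j : Fin m, τ j.castSucc = τ' j.castSucc := by
    intro j
    have h2 := congrArg (evalHom j.succ) h
    rw [map_sum, map_sum] at h2
    simp only [eval_base_succ] at h2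
    rw [Finset.sum_ite_eq univ j, Finset.sum_ite_eq univ j] at h2
    simp only [mem_univ, if_true] at h2
    exact Fin.val_injective (Nat.cast_injective h2)
  apply Equiv.ext
  intro x
  induction x using Fin.lastCases with
  | last => rw [mem_Pk.mp hτ, mem_Pk.mp hτ']
  | cast j => exact hval j

def sgn (k : Fin (m + 1)) : ℤˣ := Equiv.Perm.sign (tc A k)

def Iset : Finset (Fin (m + 1)) := univ.filter fun k => aDot A k ≠ ⊥ ∧ sgn A k = 1

lemma key (i : Fin m) (k : Fin (m + 1)) (hne : aDot A k + pA A i k ≠ ⊥)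
    (hmax : ∀ k', aDot A k' + pA A i k' ≤ aDot A k + pA A i k) :
    ∃ k', k' ≠ k ∧ (k' ∈ Iset A ↔ k ∉ Iset A) ∧
      aDot A k' + pA A i k' = aDot A k + pA A i k := by
  obtain ⟨hak, hik⟩ := WithBot.add_ne_bot.mp hne
  set τ : Equiv.Perm (Fin (m + 1)) := tc A k with hτdef
  have hτlast : τ (Fin.last m) = k := tc_last A k
  have hw : aDot A k = w A τ := tc_w A k
  set k' : Fin (m + 1) := τ i.castSucc with hk'def
  have hcs_ne : (i.castSucc : Fin (m + 1)) ≠ Fin.last m := (Fin.castSucc_lt_last i).ne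
  have hk'k : k' ≠ k := by
    intro hcon
    exact hcs_ne (τ.injective (hcon.trans hτlast.symm))
  set τ' : Equiv.Perm (Fin (m + 1)) := τ * Equiv.swap i.castSucc (Fin.last m) with hτ'def
  have hτ'last : τ' (Fin.last m) = k' := by
    simp [hτ'def, Equiv.Perm.mul_apply, Equiv.swap_apply_right, hk'def]
  have hτ'cs : τ' i.castSucc = k := by
    simp [hτ'def, Equiv.Perm.mul_apply, Equiv.swap_apply_left, hτlast]
  have hτ'other : ∀ j : Fin m, j ≠ i → τ' j.castSucc = τ j.castSucc := by
    intro j hj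
    have h1 : (j.castSucc : Fin (m + 1)) ≠ i.castSucc := by
      simpa [Fin.castSucc_inj] using hj
    have h2 : (j.castSucc : Fin (m + 1)) ≠ Fin.last m := (Fin.castSucc_lt_last j).ne
    simp [hτ'def, Equiv.Perm.mul_apply, Equiv.swap_apply_of_ne_of_ne h1 h2]
  -- the exchange identity
  have hwτ : w A τ = pA A i k' + ∑ j ∈ univ.erase i, pA A j (τ j.castSucc) := by
    rw [w, ← Finset.add_sum_erase _ _ (mem_univ i)]
  have hwτ' : w A τ' = pA A i k + ∑ j ∈ univ.erase i, pA A j (τ j.castSucc) := by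
    rw [w, ← Finset.add_sum_erase _ _ (mem_univ i), hτ'cs]
    congr 1
    exact Finset.sum_congr rfl fun j hj => by rw [hτ'other j (Finset.ne_of_mem_erase hj)]
  have hkey : w A τ' + pA A i k' = w A τ + pA A i k := by
    rw [hwτ, hwτ']
    abel
  have hτ'mem : τ' ∈ Pk m k' := mem_Pk.mpr hτ'last
  have hge : aDot A k + pA A i k ≤ aDot A k' + pA A i k' := by
    calc aDot A k + pA A i k = w A τ' + pA A i k' := by rw [hw, hkey]
      _ ≤ aDot A k' + pA A i k' := add_le_add_left (Finset.le_sup hτ'mem) _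
  have heq : aDot A k' + pA A i k' = aDot A k + pA A i k := le_antisymm (hmax k') hge
  obtain ⟨hak', hik'⟩ := WithBot.add_ne_bot.mp (heq ▸ hne)
  have hcanc : aDot A k' = w A τ' := by
    apply WithBot.add_right_cancel hik'
    rw [heq, hw, ← hkey]
  have htc' : tc A k' = τ' := by
    apply w_inj A (tc_mem A k') hτ'mem
    · rw [← tc_w A k']; exact hak'
    · rw [← tc_w A k']; exact hcanc
  have hsgn : sgn A k' = sgn A k * (-1) := by
    rw [sgn, htc', hτ'def, Equiv.Perm.sign_mul, Equiv.Perm.sign_swap hcs_ne, sgn]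
  refine ⟨k', hk'k, ?_, heq⟩
  have hmemk : k ∈ Iset A ↔ sgn A k = 1 := by simp [Iset, hak]
  have hmemk' : k' ∈ Iset A ↔ sgn A k' = 1 := by simp [Iset, hak']
  rw [hmemk, hmemk', hsgn]
  rcases Int.units_eq_one_or (sgn A k) with h1 | h1 <;> simp [h1]

theorem core (g : Fin m → Fin (m + 1)) (hg : Function.Injective g)
    (hA : ∀ j, A j (g j) ≠ ⊥) :
    ∃ (I : Finset (Fin (m + 1))) (α : Fin (m + 1) → WithBot ℝ),
      (∃ k, α k ≠ ⊥) ∧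
      ∀ j : Fin m, (I.sup fun k => α k + A j k) = (Iᶜ.sup fun k => α k + A j k) := by
  refine ⟨Iset A, fun k => p m (aDot A k), ?_, ?_⟩
  · -- some coefficient is not ⊥
    have hns : ¬ Function.Surjective g := by
      intro hs
      have := Fintype.card_le_of_surjective g hs
      simp at this
    unfold Function.Surjective at hns
    push_neg at hns
    obtain ⟨k0, hk0⟩ := hns
    set h : Fin (m + 1) → Fin (m + 1) := Fin.snoc g k0 with hh
    have hinj : Function.Injective h := by
      intro x y hxy
      induction x using Fin.lastCases with
      | last =>
        induction y using Fin.lastCases with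
        | last => rfl
        | cast y =>
          rw [hh, Fin.snoc_last, Fin.snoc_castSucc] at hxy
          exact absurd hxy.symm (hk0 y)
      | cast x =>
        induction y using Fin.lastCases with
        | last =>
          rw [hh, Fin.snoc_last, Fin.snoc_castSucc] at hxy
          exact absurd hxy (hk0 x)
        | cast y =>
          rw [hh, Fin.snoc_castSucc, Fin.snoc_castSucc] at hxy
          rw [hg hxy]
    set τ0 : Equiv.Perm (Fin (m + 1)) :=
      Equiv.ofBijective h (Finite.injective_iff_bijective.mp hinj) with hτ0
    have hτ0app : ∀ x, τ0 x = h x := fun x => rfl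
    have hτ0mem : τ0 ∈ Pk m k0 := mem_Pk.mpr (by rw [hτ0app, hh, Fin.snoc_last])
    have hwτ0 : w A τ0 ≠ ⊥ := by
      apply sum_ne_bot
      intro j _
      rw [hτ0app, hh, Fin.snoc_castSucc, pA, ne_eq, WithBot.map_eq_bot_iff]
      exact hA j
    have hbot : aDot A k0 ≠ ⊥ := by
      intro hb
      exact hwτ0 (le_bot_iff.mp (hb ▸ Finset.le_sup (f := w A) hτ0mem))
    exact ⟨k0, fun hb => hbot (p_eq_bot.mp hb)⟩
  · intro i
    set F : Fin (m + 1) → WithBot ℝ := fun k => p m (aDot A k) + A i k with hF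
    set Fd : Fin (m + 1) → WithBot (V m) := fun k => aDot A k + pA A i k with hFd
    have hpF : ∀ k, p m (Fd k) = F k := by
      intro k
      rw [hFd, hF, p_add, p_pA]
    have hGp : univ.sup F = p m (univ.sup Fd) := by
      rw [p_sup]
      exact Finset.sup_congr rfl fun k _ => (hpF k).symm
    have hsub1 : (Iset A).sup F ≤ univ.sup F := Finset.sup_mono (subset_univ _)
    have hsub2 : (Iset A)ᶜ.sup F ≤ univ.sup F := Finset.sup_mono (subset_univ _)
    by_cases hG : univ.sup Fd = ⊥
    · have hFbot : univ.sup F = ⊥ := by rw [hGp, hG, p_bot]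
      have b1 : (Iset A).sup F = ⊥ := le_bot_iff.mp (le_trans hsub1 (le_of_eq hFbot))
      have b2 : (Iset A)ᶜ.sup F = ⊥ := le_bot_iff.mp (le_trans hsub2 (le_of_eq hFbot))
      rw [b1, b2]
    · obtain ⟨k, -, hks⟩ := Finset.exists_mem_eq_sup univ univ_nonempty Fd
      have hkne : Fd k ≠ ⊥ := fun hb => hG (hks ▸ hb)
      have hmax : ∀ k', Fd k' ≤ Fd k := fun k' => hks ▸ Finset.le_sup (mem_univ k')
      obtain ⟨k', hk'k, hiff, heq⟩ := key A i k hkne hmax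
      have hFk : univ.sup F = F k := by rw [hGp, hks, hpF]
      have heqFd : Fd k' = Fd k := by simp only [hFd]; exact heq
      have hFk' : univ.sup F = F k' := by rw [hGp, hks, ← heqFd, hpF]
      by_cases hkI : k ∈ Iset A
      · have hk'I : k' ∉ Iset A := fun hmem => (hiff.mp hmem) hkI
        have e1 : (Iset A).sup F = univ.sup F :=
          le_antisymm hsub1 (hFk ▸ Finset.le_sup hkI)
        have e2 : (Iset A)ᶜ.sup F = univ.sup F :=
          le_antisymm hsub2 (hFk' ▸ Finset.le_sup (Finset.mem_compl.mpr hk'I))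
        rw [e1, e2]
      · have hk'I : k' ∈ Iset A := hiff.mpr hkI
        have e1 : (Iset A).sup F = univ.sup F :=
          le_antisymm hsub1 (hFk' ▸ Finset.le_sup hk'I)
        have e2 : (Iset A)ᶜ.sup F = univ.sup F :=
          le_antisymm hsub2 (hFk ▸ Finset.le_sup (Finset.mem_compl.mpr hkI))
        rw [e1, e2]

end Core

section Glue

variable {n : ℕ} (v : Fin (n + 1) → Fin n → WithBot ℝ)

lemma nondeg (R : Finset (Fin n)) (C : Finset (Fin (n + 1)))
    (hcard : R.card < C.card)
    (f : {x // x ∈ R} → Fin (n + 1)) (hf : Function.Injective f)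
    (hfC : ∀ x, f x ∈ C) (hfne : ∀ x, v (f x) ↑x ≠ ⊥) :
    ∃ (I : Finset (Fin (n + 1))) (α : Fin (n + 1) → WithBot ℝ),
      (∀ k, α k ≠ ⊥ → k ∈ C) ∧ (∃ k, α k ≠ ⊥) ∧
      ∀ i ∈ R, (I.sup fun k => α k + v k i) = (Iᶜ.sup fun k => α k + v k i) := by
  set m := R.card with hm
  have himg : (univ.image f).card = m := by
    rw [Finset.card_image_of_injective _ hf, Finset.card_univ, Fintype.card_coe]
  have hex : ∃ c0 ∈ C, c0 ∉ univ.image f := by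
    by_contra hcon
    push_neg at hcon
    have hsub : C ⊆ univ.image f := hcon
    have := Finset.card_le_card hsub
    omega
  obtain ⟨c0, hc0C, hc0⟩ := hex
  set C' : Finset (Fin (n + 1)) := insert c0 (univ.image f) with hC'
  have hC'card : C'.card = m + 1 := by
    rw [hC', Finset.card_insert_of_notMem hc0, himg]
  have hC'sub : C' ⊆ C := by
    rw [hC']
    intro k hk
    rcases Finset.mem_insert.mp hk with rfl | hk
    · exact hc0C
    · obtain ⟨x, -, rfl⟩ := Finset.mem_image.mp hk
      exact hfC x
  have hmemC' : ∀ x : {x // x ∈ R}, f x ∈ C' :=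
    fun x => Finset.mem_insert_of_mem (Finset.mem_image_of_mem f (mem_univ x))
  set eC := C'.orderIsoOfFin hC'card with heC
  set eR := R.orderIsoOfFin hm.symm with heR
  set Asq : Fin m → Fin (m + 1) → WithBot ℝ := fun j k => v (eC k) (eR j) with hAsq
  set gsq : Fin m → Fin (m + 1) := fun j => eC.symm ⟨f (eR j), hmemC' (eR j)⟩ with hgsq
  have hgsqinj : Function.Injective gsq := by
    intro a b hab
    simp only [hgsq] at hab
    have h1 := congrArg (fun z => (↑(eC z) : Fin (n + 1))) hab
    simp only [OrderIso.apply_symm_apply] at h1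
    exact eR.injective (hf h1)
  have hAne : ∀ j, Asq j (gsq j) ≠ ⊥ := by
    intro j
    simp only [hAsq, hgsq, OrderIso.apply_symm_apply]
    exact hfne (eR j)
  obtain ⟨I', α', hex', hid'⟩ := core Asq gsq hgsqinj hAne
  set α : Fin (n + 1) → WithBot ℝ :=
    fun k => if h : k ∈ C' then α' (eC.symm ⟨k, h⟩) else ⊥ with hα
  set φ : Fin (m + 1) → Fin (n + 1) := fun k' => ↑(eC k') with hφ
  set I : Finset (Fin (n + 1)) := I'.image φ with hI
  have hφinj : Function.Injective φ := fun a b h => eC.injective (Subtype.coe_injective h)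
  have hα_eC : ∀ k', α (φ k') = α' k' := by
    intro k'
    have hm' : φ k' ∈ C' := (eC k').2
    simp only [hα]
    rw [dif_pos hm']
    have h2 : (⟨φ k', hm'⟩ : {x // x ∈ C'}) = eC k' := Subtype.ext rfl
    rw [h2, OrderIso.symm_apply_apply]
  refine ⟨I, α, ?_, ?_, ?_⟩
  · intro k hk
    by_cases hkC' : k ∈ C'
    · exact hC'sub hkC'
    · exact absurd (dif_neg hkC') hk
  · obtain ⟨k'0, hk'0⟩ := hex'
    exact ⟨φ k'0, by rw [hα_eC]; exact hk'0⟩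
  · intro i hi
    set j := eR.symm ⟨i, hi⟩ with hj
    have hji : (↑(eR j) : Fin n) = i := by rw [hj, OrderIso.apply_symm_apply]
    have hterm : ∀ k', α (φ k') + v (φ k') i = α' k' + Asq j k' := by
      intro k'
      rw [hα_eC]
      congr 1
      simp only [hAsq]
      rw [hji]
    calc I.sup (fun k => α k + v k i) = I'.sup (fun k' => α' k' + Asq j k') := by
          rw [hI, Finset.sup_image]
          exact Finset.sup_congr rfl fun k' _ => hterm k'
      _ = I'ᶜ.sup (fun k' => α' k' + Asq j k') := hid' j
      _ = Iᶜ.sup (fun k => α k + v k i) := ?_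
    apply le_antisymm
    · have himsub : I'ᶜ.image φ ⊆ Iᶜ := by
        intro k hk
        obtain ⟨k', hk', rfl⟩ := Finset.mem_image.mp hk
        rw [Finset.mem_compl] at hk' ⊢
        intro hkI
        obtain ⟨k'', hk'', he⟩ := Finset.mem_image.mp hkI
        exact hk' ((hφinj he) ▸ hk'')
      calc I'ᶜ.sup (fun k' => α' k' + Asq j k')
            = (I'ᶜ.image φ).sup (fun k => α k + v k i) := by
            rw [Finset.sup_image]
            exact (Finset.sup_congr rfl fun k' _ => (hterm k').symm)
        _ ≤ Iᶜ.sup (fun k => α k + v k i) := Finset.sup_mono himsub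
    · apply Finset.sup_le
      intro k hk
      by_cases hkC' : k ∈ C'
      · set k' := eC.symm ⟨k, hkC'⟩ with hk'
        have hphik : φ k' = k := by
          simp only [hφ, hk', OrderIso.apply_symm_apply]
        have hk'mem : k' ∈ I'ᶜ := by
          rw [Finset.mem_compl]
          intro hk'I
          have hkI : k ∈ I := by
            rw [hI, ← hphik]
            exact Finset.mem_image_of_mem φ hk'I
          exact (Finset.mem_compl.mp hk) hkI
        have he2 : α k + v k i = α' k' + Asq j k' := by rw [← hphik]; exact hterm k'
        rw [he2]
        exact Finset.le_sup (f := fun k' => α' k' + Asq j k') hk'mem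
      · have hb : α k = ⊥ := dif_neg hkC'
        rw [hb, WithBot.bot_add]
        exact bot_le

end Glue

lemma gen {n : ℕ} (v : Fin (n + 1) → Fin n → WithBot ℝ) :
    ∀ (N : ℕ) (R : Finset (Fin n)) (C : Finset (Fin (n + 1))), R.card ≤ N →
    R.card < C.card →
    ∃ (I : Finset (Fin (n + 1))) (α : Fin (n + 1) → WithBot ℝ),
      (∀ k, α k ≠ ⊥ → k ∈ C) ∧ (∃ k, α k ≠ ⊥) ∧
      ∀ i ∈ R, (I.sup fun k => α k + v k i) = (Iᶜ.sup fun k => α k + v k i) := by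
  intro N
  induction N with
  | zero =>
    intro R C hN hcard
    set t : {x // x ∈ R} → Finset (Fin (n + 1)) :=
      fun x => C.filter fun k => v k ↑x ≠ ⊥ with ht
    by_cases hH : ∀ s : Finset {x // x ∈ R}, s.card ≤ (s.biUnion t).card
    · obtain ⟨f, hfinj, hft⟩ :=
        (Finset.all_card_le_biUnion_card_iff_exists_injective t).mp hH
      exact nondeg v R C hcard f hfinj (fun x => (Finset.mem_filter.mp (hft x)).1)
        (fun x => (Finset.mem_filter.mp (hft x)).2)
    · exfalso
      push_neg at hH
      obtain ⟨S, hS⟩ := hH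
      have h1 : S.card ≤ R.card := by
        calc S.card ≤ Fintype.card {x // x ∈ R} := Finset.card_le_univ S
          _ = R.card := Fintype.card_coe R
      omega
  | succ N ih =>
    intro R C hN hcard
    set t : {x // x ∈ R} → Finset (Fin (n + 1)) :=
      fun x => C.filter fun k => v k ↑x ≠ ⊥ with ht
    by_cases hH : ∀ s : Finset {x // x ∈ R}, s.card ≤ (s.biUnion t).card
    · obtain ⟨f, hfinj, hft⟩ :=
        (Finset.all_card_le_biUnion_card_iff_exists_injective t).mp hH
      exact nondeg v R C hcard f hfinj (fun x => (Finset.mem_filter.mp (hft x)).1)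
        (fun x => (Finset.mem_filter.mp (hft x)).2)
    · push_neg at hH
      obtain ⟨S, hS⟩ := hH
      set S₀ : Finset (Fin n) := S.image Subtype.val with hS₀
      have hS₀sub : S₀ ⊆ R := by
        intro y hy
        obtain ⟨x, -, rfl⟩ := Finset.mem_image.mp hy
        exact x.2
      have hS₀card : S₀.card = S.card :=
        Finset.card_image_of_injective _ Subtype.val_injective
      set Nc : Finset (Fin (n + 1)) := S.biUnion t with hNc
      have hNcC : Nc ⊆ C := by
        apply Finset.biUnion_subset.mpr
        intro x _
        exact Finset.filter_subset _ _
      set R₂ := R \ S₀ with hR₂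
      set C₂ := C \ Nc with hC₂
      have hR₂card : R₂.card = R.card - S₀.card := Finset.card_sdiff_of_subset hS₀sub
      have hC₂card : C₂.card = C.card - Nc.card := Finset.card_sdiff_of_subset hNcC
      have hSle : S₀.card ≤ R.card := Finset.card_le_card hS₀sub
      have hNle : Nc.card ≤ C.card := Finset.card_le_card hNcC
      obtain ⟨I, α, hsupp, hexk, hid⟩ := ih R₂ C₂ (by omega) (by omega)
      refine ⟨I, α, fun k hk => (Finset.mem_sdiff.mp (hsupp k hk)).1, hexk, ?_⟩
      intro i hi
      by_cases hi₂ : i ∈ R₂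
      · exact hid i hi₂
      · have hiS : i ∈ S₀ := by
          rw [hR₂, Finset.mem_sdiff] at hi₂
          push_neg at hi₂
          exact hi₂ hi
        have hterm : ∀ k, α k + v k i = ⊥ := by
          intro k
          by_cases hkb : α k = ⊥
          · rw [hkb, WithBot.bot_add]
          · have hkC₂ := hsupp k hkb
            rw [hC₂, Finset.mem_sdiff] at hkC₂
            obtain ⟨x, hxS, rfl⟩ := Finset.mem_image.mp hiS
            have hknt : k ∉ t x :=
              fun hmem => hkC₂.2 (Finset.mem_biUnion.mpr ⟨x, hxS, hmem⟩)
            rw [ht] at hknt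
            simp only [Finset.mem_filter, not_and, not_not] at hknt
            rw [hknt hkC₂.1, WithBot.add_bot]
        have h1 : (I.sup fun k => α k + v k i) = ⊥ :=
          le_bot_iff.mp (Finset.sup_le fun k _ => le_of_eq (hterm k))
        have h2 : (Iᶜ.sup fun k => α k + v k i) = ⊥ :=
          le_bot_iff.mp (Finset.sup_le fun k _ => le_of_eq (hterm k))
        rw [h1, h2]

end MaxplusRadonAux

/-- **Max-plus Radon theorem**: every family of `n+1` vectors in `R_max^n`
(`R_max = (ℝ ∪ {-∞}, max, +)`, modelled by `WithBot ℝ`) is linearly dependent in the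
Gondran–Minoux sense: the index set splits into `I` and its complement, with scalars
`α` not all `-∞`, such that `⊕_{k∈I} α_k ⊙ v_k = ⊕_{k∈Iᶜ} α_k ⊙ v_k` entrywise. -/
theorem maxplus_radon {n : ℕ} (v : Fin (n + 1) → Fin n → WithBot ℝ) :
    ∃ (I : Finset (Fin (n + 1))) (α : Fin (n + 1) → WithBot ℝ),
      (∃ k, α k ≠ ⊥) ∧
      ∀ i : Fin n, (I.sup fun k => α k + v k i) = (Iᶜ.sup fun k => α k + v k i) := by
  obtain ⟨I, α, -, hex, hid⟩ := MaxplusRadonAux.gen v n Finset.univ Finset.univ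
    (by simp) (by simp)
  exact ⟨I, α, hex, fun i => hid i (Finset.mem_univ i)⟩
end
end

section
/- For any matrices A and B over a commutative semiring S, if A = BC is a factorization with B of size m×f and C of size f×n, then any f+1 rows of A over R_max are linearly dependent in the Gondran–Minoux sense; consequently, for any A ∈ M_{m,n}(R_max), the maximal number of Gondran–Minoux independent rows of A is at most the factor rank of A: mr_GM(A) ≤ f(A). -/
open scoped Classical

noncomputable section

/-- Max-plus matrix product over `R_max = (ℝ ∪ {-∞}, max, +)` (modelled by
`WithBot ℝ`): `(BC)_{ij} = max_l (b_{il} + c_{lj})`. -/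
def mpMul {m k n : ℕ} (B : Matrix (Fin m) (Fin k) (WithBot ℝ))
    (C : Matrix (Fin k) (Fin n) (WithBot ℝ)) : Matrix (Fin m) (Fin n) (WithBot ℝ) :=
  fun i j => Finset.univ.sup fun l => B i l + C l j

/-- Gondran–Minoux linear dependence of a family of vectors in `R_max^n`. -/
def GMdep {k n : ℕ} (w : Fin k → Fin n → WithBot ℝ) : Prop :=
  ∃ (I : Finset (Fin k)) (α : Fin k → WithBot ℝ),
    (∃ j, α j ≠ ⊥) ∧
    ∀ l : Fin n, (I.sup fun j => α j + w j l) = (Iᶜ.sup fun j => α j + w j l)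

/-- The maximal row rank of `A` in the Gondran–Minoux sense: the maximal number of
rows of `A` forming a Gondran–Minoux independent family. -/
def gmRowRank {m n : ℕ} (A : Matrix (Fin m) (Fin n) (WithBot ℝ)) : ℕ :=
  sSup {k | ∃ r : Fin k → Fin m, Function.Injective r ∧ ¬ GMdep (fun i => A (r i))}

/-- The factor rank of `A`: the smallest `k` such that `A = BC` with `B` of size
`m×k` and `C` of size `k×n` (max-plus product). -/
def facRank {m n : ℕ} (A : Matrix (Fin m) (Fin n) (WithBot ℝ)) : ℕ :=
  sInf {k | ∃ (B : Matrix (Fin m) (Fin k) (WithBot ℝ))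
    (C : Matrix (Fin k) (Fin n) (WithBot ℝ)), A = mpMul B C}

/-! ### Auxiliary development: the max-plus Radon theorem -/

namespace GMAux

open Finset

variable {K : Type} [AddCommGroup K] [LinearOrder K] [IsOrderedAddMonoid K]

/-- `sup` distributes over addition of a constant on the right. -/
lemma sup_add_right {ι : Type} (s : Finset ι) (f : ι → WithBot K) (c : WithBot K) :
    (s.sup fun x => f x + c) = s.sup f + c := by
  rcases s.eq_empty_or_nonempty with h | h
  · subst h; simp
  · refine le_antisymm (Finset.sup_le fun i hi => add_le_add_left (Finset.le_sup hi) c) ?_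
    obtain ⟨i, hi, hs⟩ := Finset.exists_mem_eq_sup s h f
    rw [hs]
    exact Finset.le_sup (f := fun x => f x + c) hi

lemma add_sup_right {ι : Type} (s : Finset ι) (f : ι → WithBot K) (c : WithBot K) :
    (s.sup fun x => c + f x) = c + s.sup f := by
  rw [add_comm c]
  rw [← sup_add_right]
  exact Finset.sup_congr rfl fun i _ => add_comm _ _

lemma sup_eq_of_mem_iff {β : Type*} [SemilatticeSup β] [OrderBot β] {ι : Type*}
    (s t : Finset ι) (g : ι → β) (h : ∀ x, x ∈ s ↔ x ∈ t) : s.sup g = t.sup g :=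
  Finset.sup_congr (Finset.ext h) fun _ _ => rfl

/-- Gondran–Minoux dependence of the rows of a matrix, over arbitrary finite
index types. -/
def DepOn {R C : Type} [Fintype R] (M : R → C → WithBot K) : Prop :=
  ∃ (I : Finset R) (α : R → WithBot K), (∃ j, α j ≠ ⊥) ∧
    ∀ l : C, (I.sup fun i => α i + M i l) = (Iᶜ.sup fun i => α i + M i l)

/-- Genericity: distinct systems of representatives with finite entries have
distinct total weights. -/
def Generic {R C : Type} (M : R → C → WithBot K) : Prop :=
  ∀ (s : Finset C) (σ σ' : C → R),
    (∀ c ∈ s, M (σ c) c ≠ ⊥) → (∀ c ∈ s, M (σ' c) c ≠ ⊥) →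
    (∑ c ∈ s, M (σ c) c) = (∑ c ∈ s, M (σ' c) c) → ∀ c ∈ s, σ c = σ' c

lemma sum_ne_bot_all {ι : Type} {s : Finset ι} {f : ι → WithBot K}
    (h : ∑ i ∈ s, f i ≠ ⊥) : ∀ i ∈ s, f i ≠ ⊥ := by
  intro i hi hbot
  exact h (WithBot.sum_eq_bot_iff.mpr ⟨i, hi, hbot⟩)

/-- Tropical Cramer step: if there is a full finite system of representatives,
the rows are dependent (under genericity). -/
lemma cramer {R C : Type} [Fintype R] [Fintype C] (M : R → C → WithBot K)
    (hgen : Generic M)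
    (hA : ∃ τ : (C ⊕ Unit) ≃ R, ∀ c, M (τ (Sum.inl c)) c ≠ ⊥) : DepOn M := by
  classical
  obtain ⟨e, he⟩ := hA
  set sgn : ((C ⊕ Unit) ≃ R) → ℤˣ := fun τ => Equiv.Perm.sign (e.trans τ.symm) with hsgn_def
  set wgt : ((C ⊕ Unit) ≃ R) → WithBot K := fun τ => ∑ c : C, M (τ (Sum.inl c)) c with hwgt_def
  set F : ℤˣ → R → Finset ((C ⊕ Unit) ≃ R) :=
    (fun ε i => Finset.univ.filter fun τ => sgn τ = ε ∧ τ (Sum.inr ()) = i) with hF_def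
  set P : ℤˣ → R → WithBot K := (fun ε i => (F ε i).sup wgt) with hP_def
  -- regrouping
  have regroup : ∀ (ε : ℤˣ) (l : C),
      (Finset.univ.sup fun i => P ε i + M i l) =
      ((Finset.univ.filter fun τ => sgn τ = ε).sup
        fun τ => wgt τ + M (τ (Sum.inr ())) l) := by
    intro ε l
    apply le_antisymm
    · refine Finset.sup_le fun i _ => ?_
      have h1 : P ε i + M i l = (F ε i).sup fun τ => wgt τ + M i l :=
        (sup_add_right (F ε i) wgt (M i l)).symm
      rw [h1]
      refine Finset.sup_le fun τ hτ => ?_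
      obtain ⟨-, hs, hi⟩ := Finset.mem_filter.mp hτ
      have h2 : wgt τ + M i l = wgt τ + M (τ (Sum.inr ())) l := by rw [hi]
      rw [h2]
      exact Finset.le_sup (f := fun τ => wgt τ + M (τ (Sum.inr ())) l)
        (Finset.mem_filter.mpr ⟨Finset.mem_univ _, hs⟩)
    · refine Finset.sup_le fun τ hτ => ?_
      obtain ⟨-, hs⟩ := Finset.mem_filter.mp hτ
      have h1 : wgt τ ≤ P ε (τ (Sum.inr ())) :=
        Finset.le_sup (f := wgt) (Finset.mem_filter.mpr ⟨Finset.mem_univ _, hs, rfl⟩)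
      calc wgt τ + M (τ (Sum.inr ())) l
          ≤ P ε (τ (Sum.inr ())) + M (τ (Sum.inr ())) l := add_le_add_left h1 _
        _ ≤ _ := Finset.le_sup (f := fun i => P ε i + M i l) (Finset.mem_univ _)
  -- the column-swap involution
  have swap_le : ∀ (l : C) (ε : ℤˣ),
      ((Finset.univ.filter fun τ => sgn τ = ε).sup
        fun τ => wgt τ + M (τ (Sum.inr ())) l) ≤
      ((Finset.univ.filter fun τ => sgn τ = -ε).sup
        fun τ => wgt τ + M (τ (Sum.inr ())) l) := by
    intro l ε
    refine Finset.sup_le fun τ hτ => ?_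
    obtain ⟨-, hs⟩ := Finset.mem_filter.mp hτ
    set sw : Equiv.Perm (C ⊕ Unit) := Equiv.swap (Sum.inl l) (Sum.inr ()) with hsw
    have hsgn' : sgn (sw.trans τ) = -ε := by
      have h1 : e.trans (sw.trans τ).symm = (e.trans τ.symm).trans sw := by
        ext x
        simp [sw, Equiv.trans_apply, Equiv.symm_swap]
      have h2 : ((e.trans τ.symm).trans sw : Equiv.Perm (C ⊕ Unit)) =
          sw * (e.trans τ.symm) := (Equiv.Perm.mul_def sw (e.trans τ.symm)).symm
      show Equiv.Perm.sign (e.trans (sw.trans τ).symm) = -ε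
      rw [h1, h2, Equiv.Perm.sign_mul, Equiv.Perm.sign_swap (by simp), ← hs]
      show (-1) * sgn τ = -sgn τ
      rw [neg_one_mul]
    have hval : wgt (sw.trans τ) + M ((sw.trans τ) (Sum.inr ())) l
        = wgt τ + M (τ (Sum.inr ())) l := by
      have h3 : (sw.trans τ) (Sum.inr ()) = τ (Sum.inl l) := by
        simp [sw, Equiv.trans_apply]
      have h4 : wgt (sw.trans τ) =
          M (τ (Sum.inr ())) l + ∑ c ∈ Finset.univ.erase l, M (τ (Sum.inl c)) c := by
        have h5 : wgt (sw.trans τ) = ∑ c : C, M (τ (sw (Sum.inl c))) c := rfl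
        rw [h5, ← Finset.add_sum_erase Finset.univ (fun c => M (τ (sw (Sum.inl c))) c)
          (Finset.mem_univ l)]
        congr 1
        · rw [show sw (Sum.inl l) = Sum.inr () from Equiv.swap_apply_left _ _]
        · refine Finset.sum_congr rfl fun c hc => ?_
          have hc' : c ≠ l := Finset.ne_of_mem_erase hc
          have hsw2 : sw (Sum.inl c) = Sum.inl c := by
            apply Equiv.swap_apply_of_ne_of_ne
            · simp [hc']
            · simp
          rw [hsw2]
      have h6 : wgt τ =
          M (τ (Sum.inl l)) l + ∑ c ∈ Finset.univ.erase l, M (τ (Sum.inl c)) c :=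
        (Finset.add_sum_erase Finset.univ (fun c => M (τ (Sum.inl c)) c)
          (Finset.mem_univ l)).symm
      rw [h3, h4, h6]
      abel
    rw [← hval]
    exact Finset.le_sup (f := fun τ => wgt τ + M (τ (Sum.inr ())) l)
      (Finset.mem_filter.mpr ⟨Finset.mem_univ _, hsgn'⟩)
  have perEq : ∀ l : C,
      (Finset.univ.sup fun i => P 1 i + M i l) =
      (Finset.univ.sup fun i => P (-1) i + M i l) := by
    intro l
    rw [regroup 1 l, regroup (-1) l]
    refine le_antisymm (swap_le l 1) ?_
    have := swap_le l (-1)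
    rwa [neg_neg] at this
  -- candidate coefficients and partition
  set α : R → WithBot K := (fun i => P 1 i ⊔ P (-1) i) with hα_def
  set I : Finset R := Finset.univ.filter (fun i => P (-1) i ≤ P 1 i) with hI_def
  -- nontriviality
  have hne : α (e (Sum.inr ())) ≠ ⊥ := by
    have hw : wgt e ≠ ⊥ := by
      rw [hwgt_def]
      intro hb
      obtain ⟨c, -, hc⟩ := WithBot.sum_eq_bot_iff.mp hb
      exact he c hc
    have hmem : e ∈ F (sgn e) (e (Sum.inr ())) :=
      Finset.mem_filter.mpr ⟨Finset.mem_univ _, rfl, rfl⟩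
    have hle : wgt e ≤ P (sgn e) (e (Sum.inr ())) := Finset.le_sup (f := wgt) hmem
    have hle2 : wgt e ≤ α (e (Sum.inr ())) := by
      rcases Int.units_eq_one_or (sgn e) with h | h <;> rw [h] at hle
      · exact le_trans hle le_sup_left
      · exact le_trans hle le_sup_right
    intro hb
    rw [hb, le_bot_iff] at hle2
    exact hw hle2
  refine ⟨I, α, ⟨_, hne⟩, fun l => ?_⟩
  set V : WithBot K := Finset.univ.sup fun i => P 1 i + M i l with hV_def
  have hV' : (Finset.univ.sup fun i => P (-1) i + M i l) = V := (perEq l).symm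
  have hSle : (I.sup fun i => α i + M i l) = I.sup fun i => P 1 i + M i l := by
    refine Finset.sup_congr rfl fun i hi => ?_
    have h1 : P (-1) i ≤ P 1 i := (Finset.mem_filter.mp hi).2
    show (P 1 i ⊔ P (-1) i) + M i l = P 1 i + M i l
    rw [sup_eq_left.mpr h1]
  have hTle : (Iᶜ.sup fun i => α i + M i l) = Iᶜ.sup fun i => P (-1) i + M i l := by
    refine Finset.sup_congr rfl fun i hi => ?_
    have h1 : ¬ P (-1) i ≤ P 1 i := by
      have h2 := Finset.mem_compl.mp hi
      rw [hI_def] at h2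
      simpa using h2
    show (P 1 i ⊔ P (-1) i) + M i l = P (-1) i + M i l
    rw [sup_eq_right.mpr (le_of_lt (lt_of_not_ge h1))]
  have hsplit1 : V = (I.sup fun i => P 1 i + M i l) ⊔ (Iᶜ.sup fun i => P 1 i + M i l) := by
    rw [hV_def, ← Finset.sup_union, Finset.union_compl]
  have hsplit2 : V = (I.sup fun i => P (-1) i + M i l) ⊔ (Iᶜ.sup fun i => P (-1) i + M i l) := by
    rw [← hV', ← Finset.sup_union, Finset.union_compl]
  -- the "positive" side attains V
  have hSV : (I.sup fun i => P 1 i + M i l) = V := by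
    by_contra hS
    have hltS : (I.sup fun i => P 1 i + M i l) < V :=
      lt_of_le_of_ne (le_trans le_sup_left hsplit1.ge) hS
    have hX : (Iᶜ.sup fun i => P 1 i + M i l) = V := by
      rcases le_total (Iᶜ.sup fun i => P 1 i + M i l) (I.sup fun i => P 1 i + M i l) with h | h
      · exact absurd (hsplit1.trans (sup_eq_left.mpr h)).symm hS
      · exact (hsplit1.trans (sup_eq_right.mpr h)).symm
    have hVne : V ≠ ⊥ := fun hb => by rw [hb] at hltS; exact not_lt_bot hltS
    have hcne : Iᶜ.Nonempty := by
      rcases Finset.eq_empty_or_nonempty Iᶜ with h | h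
      · rw [h, Finset.sup_empty] at hX; exact absurd hX.symm hVne
      · exact h
    obtain ⟨i, hic, hieq⟩ := Finset.exists_mem_eq_sup Iᶜ hcne (fun i => P 1 i + M i l)
    have hival : P 1 i + M i l = V := by rw [← hX, hieq]
    have hMl : M i l ≠ ⊥ := by
      intro hb
      rw [hb, WithBot.add_bot] at hival
      exact hVne hival.symm
    have hlt2 : P 1 i < P (-1) i := by
      have h1 := Finset.mem_compl.mp hic
      rw [hI_def] at h1
      simp only [Finset.mem_filter, Finset.mem_univ, true_and] at h1
      exact lt_of_not_ge h1
    have hstrict : P 1 i + M i l < P (-1) i + M i l := WithBot.add_lt_add_right hMl hlt2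
    have hle2 : P (-1) i + M i l ≤ V := by
      rw [← hV']
      exact Finset.le_sup (f := fun i => P (-1) i + M i l) (Finset.mem_univ i)
    rw [hival] at hstrict
    exact absurd hle2 (not_le.mpr hstrict)
  -- the "negative" side attains V
  have hTV : (Iᶜ.sup fun i => P (-1) i + M i l) = V := by
    by_contra hT
    have hltT : (Iᶜ.sup fun i => P (-1) i + M i l) < V :=
      lt_of_le_of_ne (le_trans le_sup_right hsplit2.ge) hT
    have hY : (I.sup fun i => P (-1) i + M i l) = V := by
      rcases le_total (I.sup fun i => P (-1) i + M i l) (Iᶜ.sup fun i => P (-1) i + M i l) with h | h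
      · exact absurd (hsplit2.trans (sup_eq_right.mpr h)).symm hT
      · exact (hsplit2.trans (sup_eq_left.mpr h)).symm
    have hVne : V ≠ ⊥ := fun hb => by rw [hb] at hltT; exact not_lt_bot hltT
    have hcne : I.Nonempty := by
      rcases Finset.eq_empty_or_nonempty I with h | h
      · rw [h, Finset.sup_empty] at hY; exact absurd hY.symm hVne
      · exact h
    obtain ⟨i, hiI, hieq⟩ := Finset.exists_mem_eq_sup I hcne (fun i => P (-1) i + M i l)
    have hival : P (-1) i + M i l = V := by rw [← hY, hieq]
    have hMl : M i l ≠ ⊥ := by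
      intro hb
      rw [hb, WithBot.add_bot] at hival
      exact hVne hival.symm
    have hQne : P (-1) i ≠ ⊥ := by
      intro hb
      rw [hb, WithBot.bot_add] at hival
      exact hVne hival.symm
    have hle1 : P (-1) i ≤ P 1 i := (Finset.mem_filter.mp hiI).2
    have h1 : P 1 i + M i l ≤ V := by
      rw [hV_def]
      exact Finset.le_sup (f := fun i => P 1 i + M i l) (Finset.mem_univ i)
    have h2 : V ≤ P 1 i + M i l := by
      rw [← hival]
      exact add_le_add_left hle1 _
    have heq : P 1 i + M i l = P (-1) i + M i l := by rw [hival]; exact le_antisymm h1 h2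
    have hPQ : P 1 i = P (-1) i := WithBot.add_right_cancel hMl heq
    have hPne : P 1 i ≠ ⊥ := by rw [hPQ]; exact hQne
    -- attainment of both signs and the genericity contradiction
    have hF1 : (F 1 i).Nonempty := by
      rcases (F 1 i).eq_empty_or_nonempty with h | h
      · exact absurd (show P 1 i = ⊥ by rw [show P 1 i = (F 1 i).sup wgt from rfl, h,
          Finset.sup_empty]) hPne
      · exact h
    have hF2 : (F (-1) i).Nonempty := by
      rcases (F (-1) i).eq_empty_or_nonempty with h | h
      · exact absurd (show P (-1) i = ⊥ by rw [show P (-1) i = (F (-1) i).sup wgt from rfl, h,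
          Finset.sup_empty]) hQne
      · exact h
    obtain ⟨τp, hτp, hτpv⟩ := Finset.exists_mem_eq_sup (F 1 i) hF1 wgt
    obtain ⟨τm, hτm, hτmv⟩ := Finset.exists_mem_eq_sup (F (-1) i) hF2 wgt
    have hwp : wgt τp = P 1 i := hτpv.symm
    have hwm : wgt τm = P (-1) i := hτmv.symm
    have hwpm : wgt τp = wgt τm := by rw [hwp, hwm, hPQ]
    have hwpne : wgt τp ≠ ⊥ := by rw [hwp]; exact hPne
    have hwmne : wgt τm ≠ ⊥ := by rw [hwm]; exact hQne
    have hent1 : ∀ c ∈ (Finset.univ : Finset C), M (τp (Sum.inl c)) c ≠ ⊥ :=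
      sum_ne_bot_all hwpne
    have hent2 : ∀ c ∈ (Finset.univ : Finset C), M (τm (Sum.inl c)) c ≠ ⊥ :=
      sum_ne_bot_all hwmne
    have hcols := hgen Finset.univ (fun c => τp (Sum.inl c)) (fun c => τm (Sum.inl c))
      hent1 hent2 hwpm
    have hττ : τp = τm := by
      apply Equiv.ext
      rintro (c | u)
      · exact hcols c (Finset.mem_univ c)
      · cases u
        rw [(Finset.mem_filter.mp hτp).2.2, (Finset.mem_filter.mp hτm).2.2]
    have hsign : (1 : ℤˣ) = -1 := by
      have e1 : sgn τp = 1 := (Finset.mem_filter.mp hτp).2.1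
      have e2 : sgn τm = -1 := (Finset.mem_filter.mp hτm).2.1
      rw [← hττ, e1] at e2
      exact e2
    exact absurd hsign (by decide)
  rw [hSle, hTle, hSV, hTV]

/-- The max-plus Radon theorem for generic matrices: if there is one more row
than columns, the rows are Gondran–Minoux dependent. -/
lemma radon_aux (n : ℕ) : ∀ (R C : Type) [Fintype R] [Fintype C],
    Fintype.card C = n → Fintype.card R = n + 1 →
    ∀ M : R → C → WithBot K, Generic M → DepOn M := by
  induction n using Nat.strong_induction_on with
  | _ n IH =>
    intro R C _ _ hC hR M hgen
    classical
    rcases isEmpty_or_nonempty C with hCe | hCne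
    · have hRne : Nonempty R := Fintype.card_pos_iff.mp (by omega)
      obtain ⟨r⟩ := hRne
      refine ⟨Finset.univ, fun _ => (0 : WithBot K), ⟨r, by simp⟩, fun l => (hCe.elim l)⟩
    set N : C → Finset R := (fun c => Finset.univ.filter fun i => M i c ≠ ⊥) with hN_def
    by_cases hH : ∀ s : Finset C, s.card ≤ (s.biUnion N).card
    · -- Hall's condition holds: full finite system of representatives exists
      obtain ⟨g, hginj, hgmem⟩ := (Finset.all_card_le_biUnion_card_iff_exists_injective N).mp hH
      have hcard : (Finset.univ.image g).card = Fintype.card C := by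
        rw [Finset.card_image_of_injective _ hginj, Finset.card_univ]
      have h1 : ((Finset.univ.image g)ᶜ).card = 1 := by
        rw [Finset.card_compl, hcard, hR, hC]; omega
      obtain ⟨r0, hr0⟩ := Finset.card_eq_one.mp h1
      have hr0' : r0 ∉ Finset.univ.image g := by
        have : r0 ∈ (Finset.univ.image g)ᶜ := hr0 ▸ Finset.mem_singleton_self r0
        exact Finset.mem_compl.mp this
      set g' : C ⊕ Unit → R := Sum.elim g (fun _ => r0) with hg'_def
      have hg'inj : Function.Injective g' := by
        rintro (a | a) (b | b) hab
        · exact congrArg Sum.inl (hginj hab)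
        · exact absurd (Finset.mem_image.mpr ⟨a, Finset.mem_univ a, hab⟩) hr0'
        · exact absurd (Finset.mem_image.mpr ⟨b, Finset.mem_univ b, hab.symm⟩) hr0'
        · cases a; cases b; rfl
      have hbij : Function.Bijective g' := by
        refine (Fintype.bijective_iff_injective_and_card g').mpr ⟨hg'inj, ?_⟩
        simp [Fintype.card_sum, hC, hR]
      refine cramer M hgen ⟨Equiv.ofBijective g' hbij, fun c => ?_⟩
      have hmem := hgmem c
      rw [hN_def] at hmem
      simp only [Finset.mem_filter] at hmem
      exact hmem.2
    · -- Hall's condition fails: recurse on the deficient block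
      push_neg at hH
      obtain ⟨J, hJ⟩ := hH
      have hJne : J.Nonempty := Finset.card_pos.mp (lt_of_le_of_lt (Nat.zero_le _) hJ)
      set Rt : Finset R := (J.biUnion N)ᶜ with hRt_def
      have hRt : ∀ i ∈ Rt, ∀ c ∈ J, M i c = ⊥ := by
        intro i hi c hc
        by_contra hne
        exact (Finset.mem_compl.mp hi)
          (Finset.mem_biUnion.mpr ⟨c, hc, Finset.mem_filter.mpr ⟨Finset.mem_univ _, hne⟩⟩)
      set m2 : ℕ := n - J.card with hm2
      have hJle : J.card ≤ n := hC ▸ Finset.card_le_univ J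
      have hRtcard : m2 + 1 ≤ Rt.card := by
        have h1 : Rt.card = (n + 1) - (J.biUnion N).card := by
          rw [hRt_def, Finset.card_compl, hR]
        omega
      obtain ⟨Rt', hRt'sub, hRt'card⟩ := Finset.exists_subset_card_eq hRtcard
      have hm2lt : m2 < n := by
        have := hJne.card_pos
        omega
      have hC₂ : Fintype.card {c // c ∈ Jᶜ} = m2 := by
        rw [Fintype.card_coe, Finset.card_compl, hC]
      have hR₂ : Fintype.card {i // i ∈ Rt'} = m2 + 1 := by
        rw [Fintype.card_coe, hRt'card]
      set M₂ : {i // i ∈ Rt'} → {c // c ∈ Jᶜ} → WithBot K := (fun i c => M i.1 c.1) with hM₂_def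
      have hRne : Nonempty R := Fintype.card_pos_iff.mp (by omega)
      obtain ⟨d⟩ := hRne
      have hgen₂ : Generic M₂ := by
        intro s σ σ' h1 h2 hsum c hc
        set lift : ({c // c ∈ Jᶜ} → {i // i ∈ Rt'}) → C → R :=
          (fun σ c => if h : c ∈ Jᶜ then (σ ⟨c, h⟩ : R) else d) with hlift_def
        have hinj : ∀ x ∈ s, ∀ y ∈ s, (Subtype.val x : C) = Subtype.val y → x = y :=
          fun x _ y _ h => Subtype.ext h
        have hsum' : (∑ c ∈ s.image Subtype.val, M (lift σ c) c)
            = ∑ c ∈ s.image Subtype.val, M (lift σ' c) c := by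
          rw [Finset.sum_image hinj, Finset.sum_image hinj]
          calc (∑ c ∈ s, M (lift σ c.1) c.1) = ∑ c ∈ s, M₂ (σ c) c := by
                refine Finset.sum_congr rfl fun x hx => ?_
                rw [hlift_def]
                simp only []
                rw [dif_pos x.2, Subtype.coe_eta]
            _ = ∑ c ∈ s, M₂ (σ' c) c := hsum
            _ = ∑ c ∈ s, M (lift σ' c.1) c.1 := by
                refine Finset.sum_congr rfl fun x hx => ?_
                rw [hlift_def]
                simp only []
                rw [dif_pos x.2, Subtype.coe_eta]
        have hside : ∀ (σ₀ : {c // c ∈ Jᶜ} → {i // i ∈ Rt'}),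
            (∀ c ∈ s, M₂ (σ₀ c) c ≠ ⊥) →
            ∀ c ∈ s.image Subtype.val, M (lift σ₀ c) c ≠ ⊥ := by
          intro σ₀ h0 x hx
          obtain ⟨c', hc', rfl⟩ := Finset.mem_image.mp hx
          rw [hlift_def]
          simp only []
          rw [dif_pos c'.2, Subtype.coe_eta]
          exact h0 c' hc'
        have hkey := hgen (s.image Subtype.val) (lift σ) (lift σ')
          (hside σ h1) (hside σ' h2) hsum' c.1 (Finset.mem_image_of_mem _ hc)
        rw [hlift_def] at hkey
        simp only [] at hkey
        rw [dif_pos c.2, dif_pos c.2, Subtype.coe_eta] at hkey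
        exact Subtype.ext hkey
      obtain ⟨I₂, α₂, ⟨j₂, hj₂⟩, hbal₂⟩ := IH m2 hm2lt {i // i ∈ Rt'} {c // c ∈ Jᶜ} hC₂ hR₂ M₂ hgen₂
      set α : R → WithBot K := (fun i => if h : i ∈ Rt' then α₂ ⟨i, h⟩ else ⊥) with hα_def
      set I : Finset R := I₂.image Subtype.val with hI_def
      have hαval : ∀ (j : {i // i ∈ Rt'}), α j.1 = α₂ j := by
        intro j
        rw [hα_def]
        simp only []
        rw [dif_pos j.2, Subtype.coe_eta]
      refine ⟨I, α, ⟨j₂.1, by rw [hαval j₂]; exact hj₂⟩, fun l => ?_⟩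
      by_cases hlJ : l ∈ J
      · have hall : ∀ i : R, α i + M i l = ⊥ := by
          intro i
          by_cases h : i ∈ Rt'
          · rw [hRt i (hRt'sub h) l hlJ, WithBot.add_bot]
          · rw [show α i = ⊥ by rw [hα_def]; simp only []; rw [dif_neg h], WithBot.bot_add]
        rw [Finset.sup_congr rfl fun i _ => hall i, Finset.sup_congr rfl fun i _ => hall i]
        simp
      · set l₂ : {c // c ∈ Jᶜ} := ⟨l, Finset.mem_compl.mpr hlJ⟩ with hl₂
        have hL : (I.sup fun i => α i + M i l) = I₂.sup fun j => α₂ j + M₂ j l₂ := by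
          rw [hI_def, Finset.sup_image]
          exact Finset.sup_congr rfl fun j _ => by rw [Function.comp, hαval j]
        have hRs : (Iᶜ.sup fun i => α i + M i l) = I₂ᶜ.sup fun j => α₂ j + M₂ j l₂ := by
          apply le_antisymm
          · refine Finset.sup_le fun i hi => ?_
            by_cases h : i ∈ Rt'
            · have hj : (⟨i, h⟩ : {i // i ∈ Rt'}) ∈ I₂ᶜ := by
                rw [Finset.mem_compl]
                intro hmem
                exact (Finset.mem_compl.mp hi)
                  (hI_def ▸ Finset.mem_image.mpr ⟨⟨i, h⟩, hmem, rfl⟩)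
              calc α i + M i l = α₂ ⟨i, h⟩ + M₂ ⟨i, h⟩ l₂ := by
                    rw [show α i = α₂ ⟨i, h⟩ from hαval ⟨i, h⟩]
                _ ≤ _ := Finset.le_sup (f := fun j => α₂ j + M₂ j l₂) hj
            · rw [show α i = ⊥ by rw [hα_def]; simp only []; rw [dif_neg h], WithBot.bot_add]
              exact bot_le
          · refine Finset.sup_le fun j hj => ?_
            have hij : j.1 ∈ Iᶜ := by
              rw [Finset.mem_compl]
              intro hmem
              rw [hI_def] at hmem
              obtain ⟨j', hj', hjj⟩ := Finset.mem_image.mp hmem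
              rw [show j' = j from Subtype.ext hjj] at hj'
              exact (Finset.mem_compl.mp hj) hj'
            calc α₂ j + M₂ j l₂ = α j.1 + M j.1 l := by rw [hαval j]
              _ ≤ _ := Finset.le_sup (f := fun i => α i + M i l) hij
        rw [hL, hRs]
        exact (hbal₂ l₂).trans (sup_eq_of_mem_iff _ _ _ (fun x => by
          simp [Finset.mem_compl]))

lemma sum_range_two_pow (n : ℕ) : (∑ x ∈ Finset.range n, 2 ^ x) + 1 = 2 ^ n := by
  induction n with
  | zero => simp
  | succ n ih =>
    rw [Finset.sum_range_succ, pow_succ]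
    omega

lemma two_pow_finset_inj : ∀ (n : ℕ) (A B : Finset ℕ), (∀ x ∈ A, x < n) → (∀ x ∈ B, x < n) →
    (∑ x ∈ A, 2 ^ x) = (∑ x ∈ B, 2 ^ x) → A = B := by
  intro n
  induction n with
  | zero =>
    intro A B hA hB _
    rw [Finset.eq_empty_of_forall_notMem fun x hx => Nat.not_lt_zero x (hA x hx),
      Finset.eq_empty_of_forall_notMem fun x hx => Nat.not_lt_zero x (hB x hx)]
  | succ n ih =>
    intro A B hA hB hsum
    have hbound : ∀ S : Finset ℕ, (∀ x ∈ S, x < n) → (∑ x ∈ S, 2 ^ x) < 2 ^ n := by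
      intro S hS
      have hsub : S ⊆ Finset.range n := fun x hx => Finset.mem_range.mpr (hS x hx)
      have h1 : (∑ x ∈ S, 2 ^ x) ≤ ∑ x ∈ Finset.range n, 2 ^ x :=
        Finset.sum_le_sum_of_subset hsub
      have h2 := sum_range_two_pow n
      omega
    have herase : ∀ (S : Finset ℕ), (∀ x ∈ S, x < n + 1) → ∀ x ∈ S.erase n, x < n := by
      intro S hS x hx
      have h1 := hS x (Finset.mem_of_mem_erase hx)
      have h2 := Finset.ne_of_mem_erase hx
      omega
    by_cases hnA : n ∈ A <;> by_cases hnB : n ∈ B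
    · have heA : 2 ^ n + (∑ x ∈ A.erase n, 2 ^ x) = ∑ x ∈ A, 2 ^ x :=
        Finset.add_sum_erase A (fun x => 2 ^ x) hnA
      have heB : 2 ^ n + (∑ x ∈ B.erase n, 2 ^ x) = ∑ x ∈ B, 2 ^ x :=
        Finset.add_sum_erase B (fun x => 2 ^ x) hnB
      have heq : (∑ x ∈ A.erase n, 2 ^ x) = ∑ x ∈ B.erase n, 2 ^ x := by omega
      have h3 := ih (A.erase n) (B.erase n) (herase A hA) (herase B hB) heq
      rw [← Finset.insert_erase hnA, ← Finset.insert_erase hnB, h3]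
    · exfalso
      have h1 : 2 ^ n ≤ ∑ x ∈ A, 2 ^ x :=
        Finset.single_le_sum (f := fun x => 2 ^ x) (fun i _ => Nat.zero_le _) hnA
      have h2 : (∑ x ∈ B, 2 ^ x) < 2 ^ n := hbound B fun x hx => by
        have := hB x hx
        have : x ≠ n := fun h => hnB (h ▸ hx)
        omega
      omega
    · exfalso
      have h1 : 2 ^ n ≤ ∑ x ∈ B, 2 ^ x :=
        Finset.single_le_sum (f := fun x => 2 ^ x) (fun i _ => Nat.zero_le _) hnB
      have h2 : (∑ x ∈ A, 2 ^ x) < 2 ^ n := hbound A fun x hx => by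
        have := hA x hx
        have : x ≠ n := fun h => hnA (h ▸ hx)
        omega
      omega
    · exact ih A B
        (fun x hx => by have := hA x hx; have : x ≠ n := fun h => hnA (h ▸ hx); omega)
        (fun x hx => by have := hB x hx; have : x ≠ n := fun h => hnB (h ▸ hx); omega)
        hsum

lemma lex_sum {ι : Type} (s : Finset ι) (p : ι → ℝ × ℝ) :
    (∑ i ∈ s, (toLex (p i) : ℝ ×ₗ ℝ)) = toLex (∑ i ∈ s, p i) := by
  induction s using Finset.cons_induction with
  | empty => rfl
  | cons a s ha ih => rw [Finset.sum_cons, Finset.sum_cons, ih]; rfl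

/-- The max-plus Radon theorem over `WithBot ℝ`: any `k+1` vectors in `R_max^k`
are Gondran–Minoux dependent. -/
lemma radonR (k : ℕ) (w : Fin (k + 1) → Fin k → WithBot ℝ) : GMdep w := by
  classical
  -- exponents for the symbolic perturbation
  set a : Fin (k + 1) → Fin k → ℕ := (fun i c => (i : ℕ) + (k + 1) * (c : ℕ)) with ha_def
  have hadiv : ∀ (i : Fin (k + 1)) (c : Fin k), a i c / (k + 1) = (c : ℕ) := by
    intro i c
    rw [ha_def]
    simp only []
    rw [Nat.add_mul_div_left _ _ (Nat.succ_pos k), Nat.div_eq_of_lt i.2, Nat.zero_add]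
  have hamod : ∀ (i : Fin (k + 1)) (c : Fin k), a i c % (k + 1) = (i : ℕ) := by
    intro i c
    rw [ha_def]
    simp only []
    rw [Nat.add_mul_mod_self_left, Nat.mod_eq_of_lt i.2]
  have habound : ∀ (i : Fin (k + 1)) (c : Fin k), a i c < (k + 1) * (k + 1) := by
    intro i c
    rw [ha_def]
    simp only []
    calc (i : ℕ) + (k + 1) * (c : ℕ) < (k + 1) + (k + 1) * (c : ℕ) := by
          exact Nat.add_lt_add_right i.2 _
      _ = (k + 1) * ((c : ℕ) + 1) := by ring
      _ ≤ (k + 1) * (k + 1) := Nat.mul_le_mul_left _ (by have := c.2; omega)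
  set E : Fin (k + 1) → Fin k → ℝ := (fun i c => ((2 ^ (a i c) : ℕ) : ℝ)) with hE_def
  set M : Fin (k + 1) → Fin k → WithBot (ℝ ×ₗ ℝ) :=
    (fun i c => (w i c).map fun x => toLex (x, E i c)) with hM_def
  have hMval : ∀ (i : Fin (k + 1)) (c : Fin k) (x : ℝ), w i c = (x : WithBot ℝ) →
      M i c = ((toLex (x, E i c) : ℝ ×ₗ ℝ) : WithBot (ℝ ×ₗ ℝ)) := by
    intro i c x hx
    rw [hM_def]
    simp only []
    rw [hx]
    rfl
  have hMbot : ∀ (i : Fin (k + 1)) (c : Fin k), M i c = ⊥ ↔ w i c = ⊥ := by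
    intro i c
    rw [hM_def]
    simp only []
    cases w i c with
    | bot => simp [WithBot.map_bot]
    | coe x => simp [WithBot.map_coe]
  have hgen : Generic M := by
    intro s σ σ' h1 h2 hsum c hc
    -- extract finite values
    have hval : ∀ (σ₀ : Fin k → Fin (k + 1)), (∀ c ∈ s, M (σ₀ c) c ≠ ⊥) →
        ∀ c ∈ s, M (σ₀ c) c =
          ((toLex (WithBot.unbotD 0 (w (σ₀ c) c), E (σ₀ c) c) : ℝ ×ₗ ℝ) : WithBot (ℝ ×ₗ ℝ)) := by
      intro σ₀ h0 c hc
      have hw : w (σ₀ c) c ≠ ⊥ := fun hb => h0 c hc ((hMbot _ _).mpr hb)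
      cases hwv : w (σ₀ c) c with
      | bot => exact absurd hwv hw
      | coe x => rw [hMval _ _ x hwv]; rfl
    rw [Finset.sum_congr rfl (hval σ h1), Finset.sum_congr rfl (hval σ' h2)] at hsum
    rw [← WithBot.coe_sum, ← WithBot.coe_sum] at hsum
    have hsum2 := WithBot.coe_inj.mp hsum
    rw [lex_sum, lex_sum] at hsum2
    have hsum3 := congrArg (fun p : ℝ × ℝ => p.2) (toLex.injective hsum2)
    simp only [Prod.snd_sum] at hsum3
    -- now a sum of powers of two in ℝ, hence in ℕ
    have hsum4 : (∑ c ∈ s, 2 ^ (a (σ c) c)) = ∑ c ∈ s, 2 ^ (a (σ' c) c) := by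
      have hc1 : ((∑ c ∈ s, 2 ^ (a (σ c) c) : ℕ) : ℝ) = ((∑ c ∈ s, 2 ^ (a (σ' c) c) : ℕ) : ℝ) := by
        push_cast
        simp only [hE_def] at hsum3
        exact_mod_cast hsum3
      exact_mod_cast hc1
    -- image finsets
    have hinj : ∀ (σ₀ : Fin k → Fin (k + 1)), ∀ x ∈ s, ∀ y ∈ s,
        a (σ₀ x) x = a (σ₀ y) y → x = y := by
      intro σ₀ x _ y _ hxy
      have := congrArg (fun t => t / (k + 1)) hxy
      simp only [hadiv] at this
      exact Fin.ext this
    have himg : s.image (fun c => a (σ c) c) = s.image (fun c => a (σ' c) c) := by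
      apply two_pow_finset_inj ((k + 1) * (k + 1))
      · intro x hx
        obtain ⟨c', _, rfl⟩ := Finset.mem_image.mp hx
        exact habound _ _
      · intro x hx
        obtain ⟨c', _, rfl⟩ := Finset.mem_image.mp hx
        exact habound _ _
      · rw [Finset.sum_image (hinj σ), Finset.sum_image (hinj σ')]
        exact hsum4
    -- decode
    have hmem : a (σ c) c ∈ s.image (fun c => a (σ' c) c) := by
      rw [← himg]
      exact Finset.mem_image_of_mem _ hc
    obtain ⟨c'', hc'', heq⟩ := Finset.mem_image.mp hmem
    have hcc : c'' = c := by
      have := congrArg (fun t => t / (k + 1)) heq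
      simp only [hadiv] at this
      exact Fin.ext this
    rw [hcc] at heq
    have := congrArg (fun t => t % (k + 1)) heq
    simp only [hamod] at this
    exact (Fin.ext this).symm
  have hdep : DepOn M :=
    radon_aux k (Fin (k + 1)) (Fin k) (Fintype.card_fin k) (Fintype.card_fin (k + 1)) M hgen
  -- project to the first (real) coordinate
  obtain ⟨I, α', ⟨j0, hj0⟩, hbal⟩ := hdep
  set π : WithBot (ℝ ×ₗ ℝ) → WithBot ℝ := (fun x => x.map fun p => (ofLex p).1) with hπ_def
  have hπbot : π ⊥ = ⊥ := rfl
  have hπmono : Monotone π := by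
    intro x y hxy
    cases x with
    | bot => exact bot_le
    | coe p =>
      cases y with
      | bot => exact absurd hxy (by simp)
      | coe q =>
        have hpq : p ≤ q := WithBot.coe_le_coe.mp hxy
        have h1 : (ofLex p).1 ≤ (ofLex q).1 := by
          rcases Prod.Lex.le_iff.mp hpq with h | ⟨h, -⟩
          · exact le_of_lt h
          · exact le_of_eq h
        show ((ofLex p).1 : WithBot ℝ) ≤ ((ofLex q).1 : WithBot ℝ)
        exact WithBot.coe_le_coe.mpr h1
  have hπsup : ∀ x y, π (x ⊔ y) = π x ⊔ π y := by
    intro x y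
    rcases le_total x y with h | h
    · rw [sup_eq_right.mpr h, sup_eq_right.mpr (hπmono h)]
    · rw [sup_eq_left.mpr h, sup_eq_left.mpr (hπmono h)]
  have hπadd : ∀ x y, π (x + y) = π x + π y := by
    intro x y
    cases x with
    | bot => rw [WithBot.bot_add, hπbot, WithBot.bot_add]
    | coe p =>
      cases y with
      | bot => rw [WithBot.add_bot, hπbot, WithBot.add_bot]
      | coe q =>
        rw [← WithBot.coe_add]
        show ((ofLex (p + q)).1 : WithBot ℝ) = _
        rw [show (ofLex (p + q)).1 = (ofLex p).1 + (ofLex q).1 from rfl]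
        exact WithBot.coe_add _ _
  have hπM : ∀ (i : Fin (k + 1)) (c : Fin k), π (M i c) = w i c := by
    intro i c
    cases hwv : w i c with
    | bot => rw [(hMbot i c).mpr hwv]; exact hπbot
    | coe x => rw [hMval i c x hwv]; rfl
  refine ⟨I, fun i => π (α' i), ⟨j0, ?_⟩, fun l => ?_⟩
  · cases hα : α' j0 with
    | bot => exact absurd hα hj0
    | coe p =>
      rw [hπ_def]
      simp only [hα, WithBot.map_coe]
      exact WithBot.coe_ne_bot
  · have hb := congrArg π (hbal l)
    rw [Finset.comp_sup_eq_sup_comp π hπsup hπbot, Finset.comp_sup_eq_sup_comp π hπsup hπbot]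
      at hb
    have hfun : ∀ i : Fin (k + 1), (π ∘ fun i => α' i + M i l) i = π (α' i) + w i l := by
      intro i
      show π (α' i + M i l) = _
      rw [hπadd, hπM]
    calc (I.sup fun j => π (α' j) + w j l)
        = I.sup (π ∘ fun i => α' i + M i l) := (Finset.sup_congr rfl fun i _ => hfun i).symm
      _ = _ := by
          rw [hb]
          exact (sup_eq_of_mem_iff _ _ _ (fun x => by simp [Finset.mem_compl])).trans
            (Finset.sup_congr rfl fun i _ => hfun i)

/-- Gondran–Minoux dependence of a subfamily extends to the full family. -/
lemma GMdep_extend {a b n : ℕ} {e : Fin a → Fin b} (he : Function.Injective e)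
    {w : Fin b → Fin n → WithBot ℝ} (h : GMdep fun i => w (e i)) : GMdep w := by
  classical
  obtain ⟨I, α, ⟨j0, hj0⟩, hbal⟩ := h
  set αx : Fin b → WithBot ℝ :=
    (fun i => if h : ∃ j, e j = i then α h.choose else ⊥) with hαx_def
  have hαx : ∀ j : Fin a, αx (e j) = α j := by
    intro j
    have hex : ∃ j', e j' = e j := ⟨j, rfl⟩
    rw [hαx_def]
    simp only []
    rw [dif_pos hex]
    congr 1
    exact he hex.choose_spec
  refine ⟨I.image e, αx, ⟨e j0, by rw [hαx j0]; exact hj0⟩, fun l => ?_⟩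
  have hL : ((I.image e).sup fun i => αx i + w i l) = I.sup fun j => α j + w (e j) l := by
    rw [Finset.sup_image]
    exact Finset.sup_congr rfl fun j _ => by rw [Function.comp, hαx j]
  have hRs : ((I.image e)ᶜ.sup fun i => αx i + w i l) = Iᶜ.sup fun j => α j + w (e j) l := by
    apply le_antisymm
    · refine Finset.sup_le fun i hi => ?_
      by_cases hex : ∃ j, e j = i
      · obtain ⟨j, rfl⟩ := hex
        have hjc : j ∈ Iᶜ := by
          rw [Finset.mem_compl]
          intro hj
          exact (Finset.mem_compl.mp hi) (Finset.mem_image_of_mem e hj)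
        rw [show αx (e j) = α j from hαx j]
        exact Finset.le_sup (f := fun j => α j + w (e j) l) hjc
      · rw [show αx i = ⊥ by rw [hαx_def]; simp only []; rw [dif_neg hex], WithBot.bot_add]
        exact bot_le
    · refine Finset.sup_le fun j hj => ?_
      have hic : e j ∈ (I.image e)ᶜ := by
        rw [Finset.mem_compl]
        intro hmem
        obtain ⟨j', hj', hjj⟩ := Finset.mem_image.mp hmem
        rw [he hjj] at hj'
        exact (Finset.mem_compl.mp hj) hj'
      rw [show α j + w (e j) l = αx (e j) + w (e j) l by rw [hαx j]]
      exact Finset.le_sup (f := fun i => αx i + w i l) hic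
  rw [hL, hRs]
  exact hbal l

/-- Dependence of rows of `B` transfers to the corresponding rows of `B*C`. -/
lemma GMdep_mpMul {m f n p : ℕ} (B : Matrix (Fin m) (Fin f) (WithBot ℝ))
    (C : Matrix (Fin f) (Fin n) (WithBot ℝ)) (r : Fin p → Fin m)
    (h : GMdep fun i => B (r i)) : GMdep fun i => mpMul B C (r i) := by
  obtain ⟨I, α, hnt, hbal⟩ := h
  refine ⟨I, α, hnt, fun l => ?_⟩
  have key : ∀ S : Finset (Fin p), (S.sup fun j => α j + mpMul B C (r j) l)
      = Finset.univ.sup fun t => (S.sup fun j => α j + B (r j) t) + C t l := by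
    intro S
    calc (S.sup fun j => α j + mpMul B C (r j) l)
        = S.sup fun j => Finset.univ.sup fun t => α j + (B (r j) t + C t l) := by
          refine Finset.sup_congr rfl fun j _ => ?_
          show α j + (Finset.univ.sup fun t => B (r j) t + C t l) = _
          rw [← add_sup_right Finset.univ (fun t => B (r j) t + C t l) (α j)]
      _ = Finset.univ.sup fun t => S.sup fun j => α j + (B (r j) t + C t l) :=
          Finset.sup_comm _ _ _
      _ = Finset.univ.sup fun t => (S.sup fun j => α j + B (r j) t) + C t l := by
          refine Finset.sup_congr rfl fun t _ => ?_
          rw [← sup_add_right S (fun j => α j + B (r j) t) (C t l)]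
          exact Finset.sup_congr rfl fun j _ => (add_assoc _ _ _).symm
  rw [key I, key Iᶜ]
  exact Finset.sup_congr rfl fun t _ => by rw [hbal t]

end GMAux

/-- If `A = BC` with inner dimension `f`, then any `f+1` rows of `A` are linearly
dependent in the Gondran–Minoux sense; consequently `mr_GM(A) ≤ f(A)`. -/
theorem gmRowRank_le_facRank {m n : ℕ} (A : Matrix (Fin m) (Fin n) (WithBot ℝ)) :
    (∀ (f : ℕ) (B : Matrix (Fin m) (Fin f) (WithBot ℝ))
        (C : Matrix (Fin f) (Fin n) (WithBot ℝ)), A = mpMul B C →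
      ∀ r : Fin (f + 1) → Fin m, Function.Injective r → GMdep (fun i => A (r i))) ∧
    gmRowRank A ≤ facRank A := by
  have main : ∀ (f : ℕ) (B : Matrix (Fin m) (Fin f) (WithBot ℝ))
      (C : Matrix (Fin f) (Fin n) (WithBot ℝ)), A = mpMul B C →
      ∀ r : Fin (f + 1) → Fin m, Function.Injective r → GMdep (fun i => A (r i)) := by
    intro f B C hBC r hr
    have hB : GMdep fun i => B (r i) := GMAux.radonR f fun i => B (r i)
    have hA := GMAux.GMdep_mpMul B C r hB
    rw [hBC]
    exact hA
  refine ⟨main, ?_⟩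
  -- the factorization set is nonempty
  have hne : {k | ∃ (B : Matrix (Fin m) (Fin k) (WithBot ℝ))
      (C : Matrix (Fin k) (Fin n) (WithBot ℝ)), A = mpMul B C}.Nonempty := by
    refine ⟨n, A, fun l j => if l = j then (0 : WithBot ℝ) else ⊥, ?_⟩
    funext i j
    show A i j = Finset.univ.sup fun l => A i l + if l = j then (0 : WithBot ℝ) else ⊥
    apply le_antisymm
    · have h1 : A i j = A i j + if j = j then (0 : WithBot ℝ) else ⊥ := by simp
      rw [h1]
      exact Finset.le_sup (f := fun l => A i l + if l = j then (0 : WithBot ℝ) else ⊥)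
        (Finset.mem_univ j)
    · refine Finset.sup_le fun l _ => ?_
      by_cases hlj : l = j
      · subst hlj; simp
      · simp [hlj]
  obtain ⟨B, C, hBC⟩ := Nat.sInf_mem hne
  -- every cardinality of an independent family is at most facRank A
  have hbound : ∀ k ∈ {k | ∃ r : Fin k → Fin m, Function.Injective r ∧
      ¬ GMdep (fun i => A (r i))}, k ≤ facRank A := by
    rintro k ⟨r, hrinj, hnd⟩
    by_contra hk
    push_neg at hk
    have hle : facRank A + 1 ≤ k := hk
    set e : Fin (facRank A + 1) → Fin k := Fin.castLE hle with he_def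
    have heinj : Function.Injective e := Fin.castLE_injective hle
    have hdep : GMdep fun i => A (r (e i)) :=
      main (facRank A) B C hBC (fun i => r (e i)) fun x y hxy => heinj (hrinj hxy)
    exact hnd (GMAux.GMdep_extend heinj hdep)
  have h0 : (0 : ℕ) ∈ {k | ∃ r : Fin k → Fin m, Function.Injective r ∧
      ¬ GMdep (fun i => A (r i))} := by
    refine ⟨fun i => i.elim0, fun i => i.elim0, ?_⟩
    rintro ⟨I, α, ⟨j, -⟩, -⟩
    exact j.elim0
  exact csSup_le ⟨0, h0⟩ hbound
end
end

section
/- For all matrices A, B ∈ M_{m,n}(R_max), the tropical rank is subadditive: trop(A ⊕ B) ≤ trop(A) + trop(B), where A ⊕ B denotes the entrywise maximum of A and B. -/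
open scoped Classical

noncomputable section

/-- A square matrix over `R_max = (ℝ ∪ {-∞}, max, +)` (modelled by `WithBot ℝ`) is
tropically nonsingular if the maximum in its permanent `max_σ Σ_i m_{iσ(i)}` is
finite and attained by exactly one permutation. -/
def TropNonsing {k : ℕ} (M : Matrix (Fin k) (Fin k) (WithBot ℝ)) : Prop :=
  ∃ σ : Equiv.Perm (Fin k), (∑ i, M i (σ i)) ≠ ⊥ ∧
    ∀ τ : Equiv.Perm (Fin k), τ ≠ σ → (∑ i, M i (τ i)) < ∑ i, M i (σ i)

/-- The tropical rank of `A`: the largest `k` such that `A` has a tropically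
nonsingular `k×k` submatrix. -/
def tropRank {m n : ℕ} (A : Matrix (Fin m) (Fin n) (WithBot ℝ)) : ℕ :=
  sSup {k | ∃ (r : Fin k → Fin m) (c : Fin k → Fin n),
    Function.Injective r ∧ Function.Injective c ∧
    TropNonsing (fun a b => A (r a) (c b))}

/-- A sum in `WithBot ℝ` is non-bot iff every term is non-bot. -/
lemma sum_ne_bot_iff {α : Type*} (t : Finset α) (f : α → WithBot ℝ) :
    (∑ i ∈ t, f i) ≠ ⊥ ↔ ∀ i ∈ t, f i ≠ ⊥ := by
  classical
  induction t using Finset.induction_on with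
  | empty => simp
  | @insert a t ha ih =>
      rw [Finset.sum_insert ha]
      simp only [ne_eq, WithBot.add_eq_bot, not_or] at *
      constructor
      · rintro ⟨h1, h2⟩ i hi
        rcases Finset.mem_insert.mp hi with rfl | hi
        · exact h1
        · exact ih.mp h2 i hi
      · intro h
        exact ⟨h a (Finset.mem_insert_self a t),
          ih.mpr fun i hi => h i (Finset.mem_insert_of_mem hi)⟩

/-- Reindexing a sum over a finset via `orderEmbOfFin`. -/
lemma sum_emb_eq {β : Type*} [AddCommMonoid β] {k s : ℕ} (S : Finset (Fin k))
    (h : S.card = s) (f : Fin k → β) :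
    ∑ a : Fin s, f (S.orderEmbOfFin h a) = ∑ i ∈ S, f i := by
  have himg : Finset.image (S.orderEmbOfFin h) Finset.univ = S := by
    apply Finset.coe_injective
    rw [Finset.coe_image, Finset.coe_univ, Set.image_univ, Finset.range_orderEmbOfFin]
  conv_rhs => rw [← himg]
  rw [Finset.sum_image (fun a _ b _ hab => (S.orderEmbOfFin h).injective hab)]

lemma mem_le_tropRank {m n : ℕ} (A : Matrix (Fin m) (Fin n) (WithBot ℝ)) {k : ℕ}
    (hk : k ∈ {k | ∃ (r : Fin k → Fin m) (c : Fin k → Fin n),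
      Function.Injective r ∧ Function.Injective c ∧
      TropNonsing (fun a b => A (r a) (c b))}) : k ≤ tropRank A := by
  apply le_csSup _ hk
  refine ⟨m, fun x hx => ?_⟩
  obtain ⟨r, c, hr, -, -⟩ := hx
  simpa using Fintype.card_le_of_injective r hr

/-- Subadditivity of the tropical rank: `trop(A ⊕ B) ≤ trop(A) + trop(B)`, where
`A ⊕ B` is the entrywise maximum. -/
theorem tropRank_subadditive {m n : ℕ} (A B : Matrix (Fin m) (Fin n) (WithBot ℝ)) :
    tropRank (fun i j => A i j ⊔ B i j) ≤ tropRank A + tropRank B := by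
  classical
  have hzero : ∀ (D : Matrix (Fin m) (Fin n) (WithBot ℝ)),
      (0 : ℕ) ∈ {k | ∃ (r : Fin k → Fin m) (c : Fin k → Fin n),
        Function.Injective r ∧ Function.Injective c ∧
        TropNonsing (fun a b => D (r a) (c b))} := by
    intro D
    refine ⟨fun x => x.elim0, fun x => x.elim0, fun x => x.elim0, fun x => x.elim0,
      1, by simp, fun τ hτ => absurd (Subsingleton.elim τ 1) hτ⟩
  conv_lhs => unfold tropRank
  refine csSup_le ⟨0, ?_⟩ ?_
  · exact hzero fun i j => A i j ⊔ B i j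
  rintro k ⟨r, c, hr, hc, σ, hσb, hσmax⟩
  -- normalize: compose the columns with σ so the unique optimal permutation is 1
  set c' : Fin k → Fin n := fun i => c (σ i) with hc'
  have hc'inj : Function.Injective c' := hc.comp σ.injective
  set M : Matrix (Fin k) (Fin k) (WithBot ℝ) :=
    fun a b => A (r a) (c' b) ⊔ B (r a) (c' b) with hM
  have hdiag_ne : (∑ i, M i i) ≠ ⊥ := hσb
  have hMmax : ∀ τ : Equiv.Perm (Fin k), τ ≠ 1 → (∑ i, M i (τ i)) < ∑ i, M i i := by
    intro τ hτ
    have hne : σ * τ ≠ σ := fun h => hτ (mul_left_cancel (h.trans (mul_one σ).symm))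
    have := hσmax (σ * τ) hne
    simpa [hM, hc', Equiv.Perm.mul_apply] using this
  have hdiagi : ∀ i, M i i ≠ ⊥ := fun i =>
    (sum_ne_bot_iff Finset.univ fun i => M i i).mp hdiag_ne i (Finset.mem_univ i)
  -- split the diagonal according to which of A, B achieves the max
  set S : Finset (Fin k) := Finset.univ.filter
    (fun i => B (r i) (c' i) ≤ A (r i) (c' i)) with hS
  have hdiagS : ∀ i ∈ S, M i i = A (r i) (c' i) := by
    intro i hi
    exact sup_eq_left.mpr (Finset.mem_filter.mp hi).2
  have hdiagT : ∀ i ∈ Sᶜ, M i i = B (r i) (c' i) := by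
    intro i hi
    have : ¬ B (r i) (c' i) ≤ A (r i) (c' i) := by
      intro h; exact (Finset.mem_compl.mp hi) (Finset.mem_filter.mpr ⟨Finset.mem_univ i, h⟩)
    exact sup_eq_right.mpr (le_of_not_ge this)
  have hsum_split : ∀ (U : Finset (Fin k)) (f : Fin k → WithBot ℝ),
      (∑ i, f i) = (∑ i ∈ U, f i) + ∑ i ∈ Uᶜ, f i :=
    fun U f => (Finset.sum_add_sum_compl U f).symm
  have hSbot : (∑ i ∈ S, M i i) ≠ ⊥ :=
    (sum_ne_bot_iff S fun i => M i i).mpr (fun i _ => hdiagi i)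
  have hTbot : (∑ i ∈ Sᶜ, M i i) ≠ ⊥ :=
    (sum_ne_bot_iff Sᶜ fun i => M i i).mpr (fun i _ => hdiagi i)
  -- the generic claim, applied to A with S and to B with Sᶜ
  have key : ∀ (D : Matrix (Fin m) (Fin n) (WithBot ℝ)) (U : Finset (Fin k)),
      (∀ i j, D (r i) (c' j) ≤ M i j) →
      (∀ i ∈ U, M i i = D (r i) (c' i)) →
      ((∑ i ∈ Uᶜ, M i i) ≠ ⊥) →
      U.card ≤ tropRank D := by
    intro D U hDle hDdiag hUc
    apply mem_le_tropRank
    set e := U.orderEmbOfFin (rfl : U.card = U.card) with he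
    have hrange : Set.range e = (U : Set (Fin k)) := U.range_orderEmbOfFin rfl
    refine ⟨fun a => r (e a), fun a => c' (e a), hr.comp e.injective,
      hc'inj.comp e.injective, 1, ?_, ?_⟩
    · -- the diagonal sum is non-bot
      simp only [Equiv.Perm.one_apply]
      have : (∑ a : Fin U.card, D (r (e a)) (c' (e a)))
          = ∑ i ∈ U, D (r i) (c' i) := sum_emb_eq U rfl (fun i => D (r i) (c' i))
      rw [this]
      refine (sum_ne_bot_iff U _).mpr fun i hi => ?_
      rw [← hDdiag i hi]; exact hdiagi i
    · intro τ hτ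
      simp only [Equiv.Perm.one_apply]
      -- extend τ to a permutation of Fin k fixing Uᶜ
      set τ' := τ.viaFintypeEmbedding e.toEmbedding with hτ'
      have happ : ∀ a, τ' (e a) = e (τ a) := fun a =>
        τ.viaFintypeEmbedding_apply_image e.toEmbedding a
      have hfix : ∀ i ∈ Uᶜ, τ' i = i := by
        intro i hi
        refine τ.viaFintypeEmbedding_apply_notMem_range e.toEmbedding ?_
        rw [Function.Embedding.coeFn_mk]
        show i ∉ Set.range e
        rw [hrange]
        exact fun h => (Finset.mem_compl.mp hi) h
      have hτ'ne : τ' ≠ 1 := by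
        have : ¬ ∀ a, τ a = a := fun h => hτ (Equiv.ext h)
        push_neg at this
        obtain ⟨a, ha⟩ := this
        intro h
        apply ha
        apply e.injective
        rw [← happ a, h, Equiv.Perm.one_apply]
      have hlt := hMmax τ' hτ'ne
      rw [hsum_split U (fun i => M i (τ' i)), hsum_split U (fun i => M i i)] at hlt
      have hfixsum : (∑ i ∈ Uᶜ, M i (τ' i)) = ∑ i ∈ Uᶜ, M i i :=
        Finset.sum_congr rfl fun i hi => by rw [hfix i hi]
      rw [hfixsum] at hlt
      have hlt2 : (∑ i ∈ U, M i (τ' i)) < ∑ i ∈ U, M i i :=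
        (WithBot.add_lt_add_iff_right hUc).mp hlt
      calc (∑ a : Fin U.card, D (r (e a)) (c' (e (τ a))))
          = ∑ a : Fin U.card, D (r (e a)) (c' (τ' (e a))) := by
            refine Finset.sum_congr rfl fun a _ => by rw [happ a]
        _ = ∑ i ∈ U, D (r i) (c' (τ' i)) := sum_emb_eq U rfl (fun i => D (r i) (c' (τ' i)))
        _ ≤ ∑ i ∈ U, M i (τ' i) := Finset.sum_le_sum fun i _ => hDle i (τ' i)
        _ < ∑ i ∈ U, M i i := hlt2
        _ = ∑ i ∈ U, D (r i) (c' i) := Finset.sum_congr rfl fun i hi => hDdiag i hi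
        _ = ∑ a : Fin U.card, D (r (e a)) (c' (e a)) :=
            (sum_emb_eq U rfl (fun i => D (r i) (c' i))).symm
  have hA : S.card ≤ tropRank A :=
    key A S (fun i j => le_sup_left) hdiagS hTbot
  have hB : Sᶜ.card ≤ tropRank B := by
    refine key B Sᶜ (fun i j => le_sup_right) hdiagT ?_
    rw [compl_compl]
    exact hSbot
  calc k = Fintype.card (Fin k) := (Fintype.card_fin k).symm
    _ = S.card + Sᶜ.card := (Finset.card_add_card_compl S).symm
    _ ≤ tropRank A + tropRank B := Nat.add_le_add hA hB
end
end
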